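/- arXiv:1307.3975 — 8 statements merged into one kernel-verified Lean document; each statement's English description precedes it below -/
import Mathlib

section
/- Let F be a finite field of order q and characteristic p, and let m ≥ 1 and d ≥ 0 be integers with q - q/p - 1 ≥ d. Suppose g : F^m → F has the property that for every x, h ∈ F^m there exists a univariate polynomial P over F of degree at most d such that P(t) = g(x + t·h) for every t ∈ F. Then g is the evaluation of an m-variate polynomial over F of total degree at most d. -/
open MvPolynomial

namespace TDC

/-- digit-wise domination in base p -/
def Dom (p e f : ℕ) : Prop := ∀ k, f / p^k % p ≤ e / p^k % p

lemma dom_refl (p e : ℕ) : Dom p e e := fun _ => le_rfl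

lemma eq_zero_of_digits_zero {p f : ℕ} (hp : 2 ≤ p) (h : ∀ k, f / p^k % p = 0) : f = 0 := by
  by_contra hf
  have h1 : p ^ Nat.log p f ≤ f := Nat.pow_log_le_self p hf
  have h2 : f < p ^ (Nat.log p f + 1) := Nat.lt_pow_succ_log_self hp f
  have h3 : 1 ≤ f / p ^ Nat.log p f := (Nat.one_le_div_iff (pow_pos (by omega) _)).mpr h1
  have h4 : f / p ^ Nat.log p f < p := by
    rw [Nat.div_lt_iff_lt_mul (pow_pos (by omega) _)]
    calc f < p ^ (Nat.log p f + 1) := h2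
    _ = p ^ Nat.log p f * p := by ring
    _ ≤ p * p ^ Nat.log p f := by ring_nf; exact le_rfl
  have := h (Nat.log p f)
  rw [Nat.mod_eq_of_lt h4] at this
  omega

lemma Dom.shift {p e f : ℕ} (h : Dom p e f) : Dom p (e / p) (f / p) := by
  intro k
  have : ∀ g : ℕ, g / p / p ^ k = g / p ^ (k+1) := by
    intro g
    rw [Nat.div_div_eq_div_mul, pow_succ, mul_comm]
  rw [this, this]
  exact h (k+1)

lemma Dom.le {p : ℕ} (hp : 2 ≤ p) : ∀ e f, Dom p e f → f ≤ e := by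
  intro e
  induction e using Nat.strong_induction_on with
  | _ e ih =>
    intro f h
    rcases Nat.eq_zero_or_pos e with he | he
    · subst he
      have : f = 0 := eq_zero_of_digits_zero hp (fun k => by
        have := h k
        simpa using Nat.le_zero.mp (le_trans this (by simp [Nat.zero_div])))
      omega
    · have h0 : f % p ≤ e % p := by simpa using h 0
      have hrec : f / p ≤ e / p := ih (e / p) (Nat.div_lt_self he (by omega)) _ h.shift
      have hf := Nat.div_add_mod f p
      have he2 := Nat.div_add_mod e p
      have := Nat.mul_le_mul_left p hrec
      omega

lemma not_dvd_choose_of_lt {p a b : ℕ} (hp : p.Prime) (hba : b ≤ a) (hap : a < p) :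
    ¬ p ∣ a.choose b := by
  intro hdvd
  have h1 : a.choose b * b.factorial * (a - b).factorial = a.factorial :=
    Nat.choose_mul_factorial_mul_factorial hba
  have h2 : p ∣ a.factorial := h1 ▸ Dvd.dvd.mul_right (Dvd.dvd.mul_right hdvd _) _
  have := (Nat.Prime.dvd_factorial hp).mp h2
  omega

lemma lucas_not_dvd {p : ℕ} (hp : p.Prime) :
    ∀ s e f, e < p ^ s → Dom p e f → ¬ p ∣ e.choose f := by
  have : Fact p.Prime := ⟨hp⟩
  intro s
  induction s with
  | zero =>
    intro e f he hd
    have he0 : e = 0 := by simpa using he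
    have hf0 : f = 0 := by have := Dom.le hp.two_le e f hd; omega
    simpa [he0, hf0] using hp.one_lt.ne'
  | succ s ih =>
    intro e f he hd
    have hmod : e.choose f ≡ (e % p).choose (f % p) * ((e / p).choose (f / p)) [MOD p] :=
      Choose.choose_modEq_choose_mod_mul_choose_div_nat
    intro hdvd
    have hdvd2 : p ∣ (e % p).choose (f % p) * ((e / p).choose (f / p)) :=
      Nat.modEq_zero_iff_dvd.mp (hmod.symm.trans (Nat.modEq_zero_iff_dvd.mpr hdvd))
    rcases (Nat.Prime.dvd_mul hp).mp hdvd2 with h | h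
    · exact not_dvd_choose_of_lt hp (by simpa using hd 0) (Nat.mod_lt _ hp.pos) h
    · refine ih (e / p) (f / p) ?_ hd.shift h
      rw [Nat.div_lt_iff_lt_mul hp.pos, ← pow_succ]
      exact he


lemma step {p : ℕ} (hp : p.Prime) {s e f : ℕ} (he : e < p ^ s) (hd : Dom p e f) (hf : f ≠ 0) :
    ∃ f', Dom p e f' ∧ f' < f ∧ f ≤ f' + p ^ (s - 1) := by
  obtain ⟨k, u, hfu, hpu⟩ : ∃ k u, p ^ k * u = f ∧ ¬ p ∣ u :=
    ⟨f.factorization p, ordCompl[p] f, Nat.ordProj_mul_ordCompl_eq_self f p,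
      Nat.not_dvd_ordCompl hp hf⟩
  have hu0 : u ≠ 0 := by rintro h; rw [h, mul_zero] at hfu; exact hf hfu.symm
  have humod : 1 ≤ u % p := Nat.one_le_iff_ne_zero.mpr
    (fun h0 => hpu (Nat.dvd_of_mod_eq_zero h0))
  have hfe : f ≤ e := Dom.le hp.two_le e f hd
  have hpk_le : p ^ k ≤ f := Nat.le_of_dvd (Nat.pos_of_ne_zero hf) ⟨u, hfu.symm⟩
  have hks : k < s := by
    have h1 : p ^ k < p ^ s := lt_of_le_of_lt (hpk_le.trans hfe) he
    exact (Nat.pow_lt_pow_iff_right hp.one_lt).mp h1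
  have hdivk : f / p ^ k = u := by rw [← hfu, Nat.mul_div_cancel_left _ (pow_pos hp.pos _)]
  refine ⟨p ^ k * (u - 1), ?_, ?_, ?_⟩
  · intro j
    rcases lt_trichotomy j k with hj | hj | hj
    · -- j < k : digit of f' is 0
      have h1 : p ^ k * (u - 1) / p ^ j = p ^ (k - j) * (u - 1) := by
        rw [show p ^ k = p ^ j * p ^ (k - j) by rw [← pow_add]; congr 1; omega,
          mul_assoc, Nat.mul_div_cancel_left _ (pow_pos hp.pos _)]
      rw [h1, show p ^ (k - j) = p * p ^ (k - j - 1) by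
        rw [← _root_.pow_succ']; congr 1; omega, mul_assoc, Nat.mul_mod_right]
      exact Nat.zero_le _
    · -- j = k
      subst hj
      have h1 : p ^ j * (u - 1) / p ^ j = u - 1 :=
        Nat.mul_div_cancel_left _ (pow_pos hp.pos _)
      have h2 : (u - 1) % p = u % p - 1 := by
        have h3 := Nat.div_add_mod u p
        have h4 : u % p < p := Nat.mod_lt _ hp.pos
        rw [show u - 1 = p * (u / p) + (u % p - 1) by omega, Nat.mul_add_mod,
          Nat.mod_eq_of_lt (by omega)]
      have h5 := hd j
      rw [hdivk] at h5
      rw [h1, h2]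
      omega
    · -- j > k : digit unchanged
      have hsplit : p ^ j = p ^ k * p ^ (j - k) := by rw [← pow_add]; congr 1; omega
      have h1 : p ^ k * (u - 1) / p ^ j = (u - 1) / p ^ (j - k) := by
        rw [hsplit, ← Nat.div_div_eq_div_mul, Nat.mul_div_cancel_left _ (pow_pos hp.pos _)]
      have h2 : f / p ^ j = u / p ^ (j - k) := by
        rw [← hfu, hsplit, ← Nat.div_div_eq_div_mul,
          Nat.mul_div_cancel_left _ (pow_pos hp.pos _)]
      have hmodu : u % p ^ (j - k) ≠ 0 := by
        intro h0
        exact hpu (dvd_trans (dvd_pow_self p (by omega)) (Nat.dvd_of_mod_eq_zero h0))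
      have h3 : (u - 1) / p ^ (j - k) = u / p ^ (j - k) := by
        have hnd : ¬ p ^ (j - k) ∣ u := fun hdvd =>
          hpu (dvd_trans (dvd_pow_self p (show j - k ≠ 0 by omega)) hdvd)
        have hs2 := Nat.succ_div (a := u - 1) (b := p ^ (j - k))
        rw [show u - 1 + 1 = u by omega] at hs2
        rw [hs2, if_neg hnd, Nat.add_zero]
      rw [h1, h3, ← h2]
      exact hd j
  · calc p ^ k * (u - 1) < p ^ k * u :=
          (mul_lt_mul_iff_right₀ (pow_pos hp.pos k)).mpr (by omega)
    _ = f := hfu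
  · have h1 : p ^ k * (u - 1) + p ^ k = p ^ k * u := by
      rw [← Nat.mul_succ]; congr 1; omega
    have h2 : p ^ k ≤ p ^ (s - 1) := Nat.pow_le_pow_right hp.pos (by omega)
    omega

lemma knapsack {p : ℕ} (hp : p.Prime) {s : ℕ} {m : ℕ} (e : Fin m → ℕ)
    (he : ∀ i, e i < p ^ s) (n : ℕ) :
    ∀ f : Fin m → ℕ, (∀ i, Dom p (e i) (f i)) → n ≤ ∑ i, f i →
    ∃ f' : Fin m → ℕ, (∀ i, Dom p (e i) (f' i)) ∧ n ≤ ∑ i, f' i ∧ ∑ i, f' i < n + p ^ (s - 1) := by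
  suffices H : ∀ N (f : Fin m → ℕ), (∀ i, Dom p (e i) (f i)) → n ≤ ∑ i, f i → ∑ i, f i ≤ N →
      ∃ f' : Fin m → ℕ, (∀ i, Dom p (e i) (f' i)) ∧ n ≤ ∑ i, f' i ∧ ∑ i, f' i < n + p ^ (s - 1) by
    exact fun f hd hn => H (∑ i, f i) f hd hn le_rfl
  intro N
  induction N with
  | zero =>
    intro f hd hn hN
    refine ⟨f, hd, hn, ?_⟩
    have : (0:ℕ) < p ^ (s - 1) := pow_pos hp.pos _
    omega
  | succ N ih =>
    intro f hd hn hN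
    by_cases hcase : ∑ i, f i < n + p ^ (s - 1)
    · exact ⟨f, hd, hn, hcase⟩
    · push_neg at hcase
      have hpos : 0 < ∑ i, f i := by
        have : (0:ℕ) < p ^ (s - 1) := pow_pos hp.pos _
        omega
      obtain ⟨i₀, hi₀⟩ : ∃ i₀, f i₀ ≠ 0 := by
        by_contra hall
        push_neg at hall
        rw [Finset.sum_eq_zero (fun i _ => hall i)] at hpos
        omega
      obtain ⟨v, hvdom, hvlt, hvge⟩ := step hp (he i₀) (hd i₀) hi₀
      set f'' := Function.update f i₀ v with hf''
      have hsum : ∑ i, f'' i = v + ∑ i ∈ Finset.univ.erase i₀, f i := by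
        rw [hf'', Finset.sum_update_of_mem (Finset.mem_univ i₀)]
        congr 1
        rw [Finset.sdiff_singleton_eq_erase]
      have hsumf : ∑ i, f i = f i₀ + ∑ i ∈ Finset.univ.erase i₀, f i :=
        (Finset.add_sum_erase _ f (Finset.mem_univ i₀)).symm
      have hd'' : ∀ i, Dom p (e i) (f'' i) := by
        intro i
        rcases eq_or_ne i i₀ with rfl | hne
        · simpa [hf''] using hvdom
        · simpa [hf'', Function.update_of_ne hne] using hd i
      exact ih f'' hd'' (by omega) (by omega)


/-- reduced exponent: representative of `j` in `{0} ∪ [1, q-1]` mod `q-1`. -/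
def rmod (q j : ℕ) : ℕ := if j = 0 then 0 else (j - 1) % (q - 1) + 1

lemma rmod_le {q : ℕ} (hq : 2 ≤ q) (j : ℕ) : rmod q j ≤ q - 1 := by
  unfold rmod
  split
  · omega
  · have : (j - 1) % (q - 1) < q - 1 := Nat.mod_lt _ (by omega)
    omega

lemma rmod_zero (q : ℕ) : rmod q 0 = 0 := rfl

lemma select {p s q d : ℕ} (hp : p.Prime) (hs : 1 ≤ s) (hq : q = p ^ s)
    (hd : d + p ^ (s - 1) + 1 ≤ q) {m : ℕ} (e : Fin m → ℕ) (he : ∀ i, e i ≤ q - 1)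
    (hD : d < ∑ i, e i) :
    ∃ f : Fin m → ℕ, (∀ i, Dom p (e i) (f i)) ∧ 1 ≤ ∑ i, f i ∧ d < rmod q (∑ i, f i) := by
  have hp1 : 1 ≤ p ^ (s - 1) := pow_pos hp.pos _
  have hq2 : 2 ≤ q := by omega
  set D := ∑ i, e i with hDdef
  obtain ⟨hk, hr⟩ : (q - 1) * ((D - d - 1) / (q - 1)) + (D - d - 1) % (q - 1) = D - d - 1 ∧
      (D - d - 1) % (q - 1) < q - 1 :=
    ⟨Nat.div_add_mod _ _, Nat.mod_lt _ (by omega)⟩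
  set k := (D - d - 1) / (q - 1) with hkdef
  set r := (D - d - 1) % (q - 1) with hrdef
  by_cases h1 : d + 1 + r ≤ q - 1
  · refine ⟨e, fun i => dom_refl p (e i), by omega, ?_⟩
    have hD0 : D ≠ 0 := by omega
    rw [rmod, if_neg hD0]
    have hsplit : D - 1 = (d + r) + (q - 1) * k := by omega
    rw [hsplit, Nat.mul_comm (q-1) k, Nat.add_mul_mod_self_right, Nat.mod_eq_of_lt (by omega)]
    omega
  · have he' : ∀ i, e i < p ^ s := fun i => by have := he i; omega
    obtain ⟨f, hfdom, hfge, hflt⟩ := knapsack hp e he' (d + 1 + (q - 1) * k) e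
      (fun i => dom_refl p (e i)) (by omega)
    refine ⟨f, hfdom, by omega, ?_⟩
    set j := ∑ i, f i with hjdef
    have hj0 : j ≠ 0 := by omega
    rw [rmod, if_neg hj0]
    have hjub : j - 1 ≤ (q - 1) * k + (q - 2) := by omega
    have hjlb : (q - 1) * k + d ≤ j - 1 := by omega
    have hsplit : j - 1 = (j - 1 - (q - 1) * k) + (q - 1) * k := by omega
    rw [hsplit, Nat.add_mul_mod_self_left, Nat.mod_eq_of_lt (by omega)]
    omega

section PolyHelpers
variable {F : Type} [Field F] [Fintype F]

lemma pow_rmod (t : F) (j : ℕ) : t ^ rmod (Fintype.card F) j = t ^ j := by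
  set q := Fintype.card F
  have hq2 : 2 ≤ q := Fintype.one_lt_card
  rcases eq_or_ne j 0 with rfl | hj
  · rfl
  rw [rmod, if_neg hj]
  rcases eq_or_ne t 0 with rfl | ht
  · rw [zero_pow hj, zero_pow (by omega)]
  · have h1 : t ^ (q - 1) = 1 := FiniteField.pow_card_sub_one_eq_one t ht
    obtain ⟨a, hab⟩ : ∃ a, j - 1 = (q-1)*a + (j-1)%(q-1) :=
      ⟨(j-1)/(q-1), by have := Nat.div_add_mod (j-1) (q-1); omega⟩
    conv_rhs => rw [show j = (q-1)*a + ((j-1)%(q-1) + 1) by omega]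
    have hsplit : t ^ ((q-1)*a + ((j-1)%(q-1)+1)) =
        (t^(q-1))^a * (t^((j-1)%(q-1)) * t^1) := by
      rw [← pow_mul, ← pow_add, ← pow_add]
    rw [hsplit, h1, one_pow, one_mul, pow_one, pow_succ]

lemma poly_eq_of_eval_eq (R P : Polynomial F) (hR : R.natDegree < Fintype.card F)
    (hP : P.natDegree < Fintype.card F) (h : ∀ t, R.eval t = P.eval t) : R = P := by
  have hsub : R - P = 0 := by
    apply Polynomial.eq_zero_of_natDegree_lt_card_of_eval_eq_zero (R - P)
      (Function.injective_id (α := F))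
    · intro t; simp [h t]
    · exact lt_of_le_of_lt (Polynomial.natDegree_sub_le R P) (by omega)
  exact sub_eq_zero.mp hsub


end PolyHelpers

variable {F : Type} [Field F] {m : ℕ}

/-- the coefficient-choice monomial exponent -/
noncomputable def W (e : Fin m →₀ ℕ) (κ : ∀ i ∈ e.support, ℕ) : (Fin m ⊕ Fin m) →₀ ℕ :=
  ∑ x ∈ e.support.attach, (Finsupp.single (Sum.inl x.1) (κ x.1 x.2) +
    Finsupp.single (Sum.inr x.1) (e x.1 - κ x.1 x.2))

noncomputable def CB (e : Fin m →₀ ℕ) (κ : ∀ i ∈ e.support, ℕ) : F :=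
  ∏ x ∈ e.support.attach, ((e x.1).choose (κ x.1 x.2) : F)

lemma W_apply_inl (e : Fin m →₀ ℕ) (κ : ∀ i ∈ e.support, ℕ) (i₀ : Fin m) :
    W e κ (Sum.inl i₀) = if h : i₀ ∈ e.support then κ i₀ h else 0 := by
  rw [W, Finsupp.finset_sum_apply]
  simp only [Finsupp.add_apply, Finsupp.single_apply, reduceCtorEq, if_false, add_zero,
    Sum.inl.injEq]
  by_cases h : i₀ ∈ e.support
  · rw [dif_pos h]
    rw [Finset.sum_eq_single (⟨i₀, h⟩ : {x // x ∈ e.support})]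
    · rw [if_pos rfl]
    · intro b _ hb
      rw [if_neg (fun hx => hb (Subtype.ext hx))]
    · intro hh; exact absurd (Finset.mem_attach _ _) hh
  · rw [dif_neg h]
    apply Finset.sum_eq_zero
    intro x _
    rw [if_neg (fun hx : (x : Fin m) = i₀ => h (hx ▸ x.2))]

lemma W_apply_inr (e : Fin m →₀ ℕ) (κ : ∀ i ∈ e.support, ℕ) (i₀ : Fin m) :
    W e κ (Sum.inr i₀) = if h : i₀ ∈ e.support then e i₀ - κ i₀ h else 0 := by
  rw [W, Finsupp.finset_sum_apply]
  simp only [Finsupp.add_apply, Finsupp.single_apply, reduceCtorEq, if_false, zero_add,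
    Sum.inr.injEq]
  by_cases h : i₀ ∈ e.support
  · rw [dif_pos h]
    rw [Finset.sum_eq_single (⟨i₀, h⟩ : {x // x ∈ e.support})]
    · rw [if_pos rfl]
    · intro b _ hb
      rw [if_neg (fun hx => hb (Subtype.ext hx))]
    · intro hh; exact absurd (Finset.mem_attach _ _) hh
  · rw [dif_neg h]
    apply Finset.sum_eq_zero
    intro x _
    rw [if_neg (fun hx : (x : Fin m) = i₀ => h (hx ▸ x.2))]

lemma prod_monomial {ι σ : Type*} (s : Finset ι) (w : ι → (σ →₀ ℕ)) (c : ι → F) :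
    ∏ i ∈ s, (monomial (w i) (c i) : MvPolynomial σ F) =
      monomial (∑ i ∈ s, w i) (∏ i ∈ s, c i) := by
  classical
  induction s using Finset.induction_on with
  | empty => simp [monomial_zero']
  | insert _ _ hx ih =>
    rename_i a s
    rw [Finset.prod_insert hx, Finset.prod_insert hx, Finset.sum_insert hx, ih, monomial_mul]

lemma binom_expand {σ : Type*} [DecidableEq σ] (u v : σ) (n : ℕ) :
    ((X u + X v : MvPolynomial σ F)) ^ n =
      ∑ k ∈ Finset.range (n+1), monomial (Finsupp.single u k + Finsupp.single v (n - k))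
        ((n.choose k : F)) := by
  rw [add_pow]
  apply Finset.sum_congr rfl
  intro k _
  rw [X_pow_eq_monomial, X_pow_eq_monomial, monomial_mul, one_mul]
  rw [show ((n.choose k : ℕ) : MvPolynomial σ F) = C ((n.choose k : ℕ) : F) by simp]
  rw [mul_comm, C_mul_monomial, mul_one]

lemma prodterm (e : Fin m →₀ ℕ) :
    (e.prod fun i k => ((X (Sum.inl i) + X (Sum.inr i) : MvPolynomial (Fin m ⊕ Fin m) F)) ^ k) =
    ∑ κ ∈ e.support.pi (fun i => Finset.range (e i + 1)), monomial (W e κ) (CB e κ) := by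
  rw [Finsupp.prod]
  rw [Finset.prod_congr rfl (fun i _ => binom_expand (Sum.inl i) (Sum.inr i) (e i)),
    Finset.prod_sum]
  apply Finset.sum_congr rfl
  intro κ _
  rw [prod_monomial]
  rfl

lemma W_sum (e : Fin m →₀ ℕ) (κ : ∀ i ∈ e.support, ℕ)
    (hκ : κ ∈ e.support.pi (fun i => Finset.range (e i + 1))) (i : Fin m) :
    W e κ (Sum.inl i) + W e κ (Sum.inr i) = e i := by
  rw [W_apply_inl, W_apply_inr]
  by_cases h : i ∈ e.support
  · rw [dif_pos h, dif_pos h]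
    have := Finset.mem_pi.mp hκ i h
    rw [Finset.mem_range] at this
    omega
  · rw [dif_neg h, dif_neg h]
    have := Finsupp.notMem_support_iff.mp h
    omega

/-- the expansion of `G` under `Xᵢ ↦ X (inl i) + X (inr i)` -/
noncomputable def Gexp (G : MvPolynomial (Fin m) F) : MvPolynomial (Fin m ⊕ Fin m) F :=
  aeval (fun i => X (Sum.inl i) + X (Sum.inr i)) G

lemma Gexp_eq_sum (G : MvPolynomial (Fin m) F) :
    Gexp G = ∑ e ∈ G.support, C (coeff e G) *
      (e.prod fun i k => ((X (Sum.inl i) + X (Sum.inr i) : MvPolynomial (Fin m ⊕ Fin m) F)) ^ k)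
      := by
  rw [Gexp]
  conv_lhs => rw [G.as_sum]
  rw [map_sum]
  apply Finset.sum_congr rfl
  intro e _
  rw [aeval_monomial]
  rfl

lemma gexp_support (G : MvPolynomial (Fin m) F) (w : (Fin m ⊕ Fin m) →₀ ℕ)
    (hw : w ∈ (Gexp G).support) :
    ∃ e ∈ G.support, ∀ i, w (Sum.inl i) + w (Sum.inr i) = e i := by
  classical
  rw [Gexp_eq_sum] at hw
  obtain ⟨e, he, hwe⟩ := Finset.mem_biUnion.mp (MvPolynomial.support_sum hw)
  refine ⟨e, he, ?_⟩
  rw [← smul_eq_C_mul] at hwe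
  have hwe2 := MvPolynomial.support_smul hwe
  rw [prodterm] at hwe2
  obtain ⟨κ, hκ, hwκ⟩ := Finset.mem_biUnion.mp (MvPolynomial.support_sum hwe2)
  have hwW : w = W e κ := by
    have := MvPolynomial.support_monomial_subset hwκ
    simpa using this
  intro i
  rw [hwW]
  exact W_sum e κ hκ i

/-- the mixed monomial exponent picking `f` in the `inr` block -/
noncomputable def w0 (e : Fin m →₀ ℕ) (f : Fin m → ℕ) : (Fin m ⊕ Fin m) →₀ ℕ :=
  Finsupp.equivFunOnFinite.symm (Sum.elim (fun i => e i - f i) f)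

@[simp] lemma w0_apply_inl (e : Fin m →₀ ℕ) (f : Fin m → ℕ) (i : Fin m) :
    w0 e f (Sum.inl i) = e i - f i := rfl

@[simp] lemma w0_apply_inr (e : Fin m →₀ ℕ) (f : Fin m → ℕ) (i : Fin m) :
    w0 e f (Sum.inr i) = f i := rfl

lemma coeff_Gexp (G : MvPolynomial (Fin m) F) (e : Fin m →₀ ℕ) (f : Fin m → ℕ)
    (hfe : ∀ i, f i ≤ e i) :
    coeff (w0 e f) (Gexp G) = coeff e G * ∏ i ∈ e.support, ((e i).choose (f i) : F) := by
  classical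
  rw [Gexp_eq_sum, MvPolynomial.coeff_sum]
  rw [Finset.sum_eq_single e]
  · rw [coeff_C_mul, prodterm, MvPolynomial.coeff_sum]
    congr 1
    have hκ₀mem : (fun i _ => e i - f i) ∈ e.support.pi (fun i => Finset.range (e i + 1)) := by
      rw [Finset.mem_pi]; intro i _; rw [Finset.mem_range]; omega
    rw [Finset.sum_eq_single_of_mem _ hκ₀mem]
    · rw [coeff_monomial, if_pos]
      · rw [CB]
        rw [Finset.prod_attach _ (fun i => ((e i).choose (e i - f i) : F))]
        apply Finset.prod_congr rfl
        intro i _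
        rw [Nat.choose_symm (hfe i)]
      · -- W e κ₀ = w0 e f
        ext a
        rcases a with i | i
        · rw [W_apply_inl, w0_apply_inl]
          split
          · rfl
          · rename_i h
            have := Finsupp.notMem_support_iff.mp h
            have := hfe i
            omega
        · rw [W_apply_inr, w0_apply_inr]
          split
          · have := hfe i; omega
          · rename_i h
            have := Finsupp.notMem_support_iff.mp h
            have := hfe i
            omega
    · intro κ hκ hne
      rw [coeff_monomial, if_neg]
      intro hWw
      apply hne
      funext i hi
      have h1 : W e κ (Sum.inl i) = e i - f i := by rw [hWw, w0_apply_inl]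
      rw [W_apply_inl, dif_pos hi] at h1
      exact h1
  · intro e' he' hne
    rw [coeff_C_mul, prodterm, MvPolynomial.coeff_sum]
    rw [Finset.sum_eq_zero, mul_zero]
    intro κ hκ
    rw [coeff_monomial, if_neg]
    intro hWw
    apply hne
    apply Finsupp.ext
    intro i
    have h1 := W_sum e' κ hκ i
    rw [hWw, w0_apply_inl, w0_apply_inr] at h1
    have := hfe i
    omega
  · intro he
    rw [coeff_C_mul, MvPolynomial.notMem_support_iff.mp he, zero_mul]


def inrdeg {m : ℕ} (w : (Fin m ⊕ Fin m) →₀ ℕ) : ℕ := ∑ i, w (Sum.inr i)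

lemma eval_sum_elim {F : Type} [Field F] {m : ℕ} (x y : Fin m → F) (G : MvPolynomial (Fin m) F) :
    eval (Sum.elim x y) (Gexp G) = eval (x + y) G := by
  rw [Gexp]
  induction G using MvPolynomial.induction_on with
  | C a => simp
  | add p q hp hq => simp only [map_add, hp, hq]
  | mul_X p i hp =>
      simp only [map_mul, map_add, aeval_X, eval_X, hp, Sum.elim_inl, Sum.elim_inr,
        Pi.add_apply]

end TDC

/-- If `F` is a finite field of order `q` and characteristic `p` with
`q - q/p - 1 ≥ d` (stated additively to avoid natural subtraction), and every
restriction of `g : F^m → F` to a line agrees everywhere with a univariate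
polynomial of degree at most `d`, then `g` is the evaluation of an `m`-variate
polynomial of total degree at most `d`. -/
theorem total_degree_characterization
    (F : Type) [Field F] [Fintype F]
    (m d : ℕ) (hm : 1 ≤ m)
    (hq : d + Fintype.card F / ringChar F + 1 ≤ Fintype.card F)
    (g : (Fin m → F) → F)
    (hline : ∀ x h : Fin m → F, ∃ P : Polynomial F, P.natDegree ≤ d ∧
      ∀ t : F, P.eval t = g (x + t • h)) :
    ∃ P : MvPolynomial (Fin m) F, P.totalDegree ≤ d ∧
      ∀ y : Fin m → F, MvPolynomial.eval y P = g y := by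
  classical
  open TDC in
  set q := Fintype.card F with hqdef
  set p := ringChar F with hpdef
  haveI : CharP F p := ringChar.charP F
  obtain ⟨s', hpprime, hps⟩ := FiniteField.card F p
  set s := (s' : ℕ) with hsdef
  have hs : 1 ≤ s := s'.2
  have hq2 : 2 ≤ q := Fintype.one_lt_card
  have hqp : q / p = p ^ (s - 1) := by
    have h := Nat.pow_div hs hpprime.pos
    rw [pow_one] at h
    rw [hqdef, hps, h]
  have hq' : d + p ^ (s - 1) + 1 ≤ q := by rw [← hqp]; exact hq
  -- obtain the reduced representative of g
  have htop := MvPolynomial.map_restrict_dom_evalₗ F (Fin m)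
  have hgmem : g ∈ Submodule.map (MvPolynomial.evalₗ F (Fin m))
      (MvPolynomial.restrictDegree (Fin m) F (q - 1)) := by
    rw [htop]; trivial
  obtain ⟨G, hGdeg, hGeval⟩ := Submodule.mem_map.mp hgmem
  have hGeval' : ∀ y, eval y G = g y := fun y => by rw [← hGeval]; rfl
  refine ⟨G, ?_, hGeval'⟩
  by_contra htd
  push_neg at htd
  rw [MvPolynomial.totalDegree] at htd
  obtain ⟨e, he, hed⟩ := Finset.lt_sup_iff.mp htd
  have hesum : (e.sum fun _ n => n) = ∑ i, e i := by
    rw [Finsupp.sum_fintype]; intro; rfl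
  rw [hesum] at hed
  have hedeg : ∀ i, e i ≤ q - 1 := fun i =>
    (MvPolynomial.mem_restrictDegree _ _ _).mp hGdeg e he i
  have hedeg' : ∀ i, e i < p ^ s := fun i => by
    have := hedeg i; rw [← hps]; omega
  -- combinatorial selection of f
  obtain ⟨f, hfdom, hfpos, hfr⟩ := select hpprime hs hps hq' (fun i => e i) hedeg hed
  have hfe : ∀ i, f i ≤ e i := fun i => Dom.le hpprime.two_le _ _ (hfdom i)
  set r := rmod q (∑ i, f i) with hrdef
  have hr_le : r ≤ q - 1 := rmod_le hq2 _
  set G' := Gexp G with hG'def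
  set Cr := ∑ w ∈ G'.support.filter (fun w => rmod q (inrdeg w) = r),
    monomial w (coeff w G') with hCrdef
  have hCrsupp : ∀ w ∈ Cr.support, w ∈ G'.support := by
    intro w hw
    obtain ⟨w', hw', hww⟩ := Finset.mem_biUnion.mp (MvPolynomial.support_sum hw)
    have hww' : w = w' := by
      have := MvPolynomial.support_monomial_subset hww
      simpa using this
    subst hww'
    exact (Finset.mem_filter.mp hw').1
  have hCr0 : Cr = 0 := by
    apply MvPolynomial.eq_zero_of_eval_eq_zero
    · intro z
      set x := z ∘ Sum.inl with hxdef
      set h' := z ∘ Sum.inr with hhdef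
      have hz : Sum.elim x h' = z := by funext v; cases v <;> rfl
      obtain ⟨P, hPdeg, hPeval⟩ := hline x h'
      have key : ∀ t : F, ∑ w ∈ G'.support,
          (coeff w G' * ∏ v, z v ^ w v) * t ^ (inrdeg w) = g (x + t • h') := by
        intro t
        rw [← hGeval' (x + t • h'), ← eval_sum_elim x (t • h') G]
        rw [MvPolynomial.eval_eq']
        apply Finset.sum_congr rfl
        intro w _
        have h4 : ∏ v, z v ^ w v =
            (∏ i, x i ^ w (Sum.inl i)) * ∏ i, h' i ^ w (Sum.inr i) := by
          rw [← hz, Fintype.prod_sum_type]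
          simp only [Sum.elim_inl, Sum.elim_inr]
        have h5 : ∏ v, Sum.elim x (t • h') v ^ w v =
            (∏ i, x i ^ w (Sum.inl i)) * ∏ i, (t * h' i) ^ w (Sum.inr i) := by
          rw [Fintype.prod_sum_type]
          simp only [Sum.elim_inl, Sum.elim_inr, Pi.smul_apply, smul_eq_mul]
        rw [h5, h4]
        simp only [mul_pow]
        rw [Finset.prod_mul_distrib, Finset.prod_pow_eq_pow_sum, inrdeg]
        ring
      set R := ∑ w ∈ G'.support, Polynomial.C (coeff w G' * ∏ v, z v ^ w v) *
        Polynomial.X ^ (rmod q (inrdeg w)) with hRdef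
      have hReval : ∀ t, R.eval t = P.eval t := by
        intro t
        rw [hPeval t, ← key t, hRdef, Polynomial.eval_finset_sum]
        apply Finset.sum_congr rfl
        intro w _
        rw [Polynomial.eval_mul, Polynomial.eval_C, Polynomial.eval_pow,
          Polynomial.eval_X, pow_rmod]
      have hRdeg : R.natDegree ≤ q - 1 := by
        apply Polynomial.natDegree_sum_le_of_forall_le
        intro w _
        exact (Polynomial.natDegree_C_mul_X_pow_le _ _).trans (rmod_le hq2 _)
      have hRP : R = P := poly_eq_of_eval_eq R P (by omega) (by omega) hReval
      have hcoeffr : R.coeff r = 0 := by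
        rw [hRP]
        exact Polynomial.coeff_eq_zero_of_natDegree_lt (by omega)
      have hevalCr : MvPolynomial.eval z Cr = R.coeff r := by
        rw [hCrdef, hRdef, Polynomial.finset_sum_coeff, map_sum, Finset.sum_filter]
        apply Finset.sum_congr rfl
        intro w _
        rw [Polynomial.coeff_C_mul, Polynomial.coeff_X_pow, MvPolynomial.eval_monomial]
        by_cases hcond : rmod q (inrdeg w) = r
        · rw [if_pos hcond, if_pos hcond.symm, mul_one]
          congr 1
          rw [Finsupp.prod_fintype]
          intro; exact pow_zero _
        · rw [if_neg hcond, if_neg (fun hh => hcond hh.symm), mul_zero]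
      rw [hevalCr, hcoeffr]
    · rw [MvPolynomial.mem_restrictDegree]
      intro w hw v
      obtain ⟨e', he', hsum⟩ := gexp_support G w (hCrsupp w hw)
      have he'deg : ∀ i, e' i ≤ q - 1 := fun i =>
        (MvPolynomial.mem_restrictDegree _ _ _).mp hGdeg e' he' i
      cases v with
      | inl i => have := hsum i; have := he'deg i; omega
      | inr i => have := hsum i; have := he'deg i; omega
  -- final contradiction
  have hw0r : rmod q (inrdeg (w0 e f)) = r := by
    have h1 : inrdeg (w0 e f) = ∑ i, f i := by
      rw [inrdeg]
      apply Finset.sum_congr rfl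
      intro i _
      rw [w0_apply_inr]
    rw [h1]
  have hw0coeff : coeff (w0 e f) Cr = 0 := by rw [hCr0, MvPolynomial.coeff_zero]
  have hsum_ite : coeff (w0 e f) Cr =
      if (w0 e f) ∈ G'.support.filter (fun w => rmod q (inrdeg w) = r)
        then coeff (w0 e f) G' else 0 := by
    rw [hCrdef, MvPolynomial.coeff_sum]
    rw [Finset.sum_congr rfl (fun w _ => coeff_monomial _ w (coeff w G'))]
    exact Finset.sum_ite_eq' _ _ _
  have hG'w0 : coeff (w0 e f) G' = 0 := by
    by_cases hmem : (w0 e f) ∈ G'.support.filter (fun w => rmod q (inrdeg w) = r)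
    · rw [hw0coeff, if_pos hmem] at hsum_ite; exact hsum_ite.symm
    · by_contra h0
      exact hmem (Finset.mem_filter.mpr ⟨MvPolynomial.mem_support_iff.mpr h0, hw0r⟩)
  rw [coeff_Gexp G e f hfe] at hG'w0
  have hchoose : ∀ i ∈ e.support, ((e i).choose (f i) : F) ≠ 0 := by
    intro i _
    rw [Ne, CharP.cast_eq_zero_iff F p]
    exact lucas_not_dvd hpprime s (e i) (f i) (hedeg' i) (hfdom i)
  have hprod : (∏ i ∈ e.support, ((e i).choose (f i) : F)) ≠ 0 :=
    Finset.prod_ne_zero_iff.mpr hchoose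
  have hcoeffe : coeff e G ≠ 0 := MvPolynomial.mem_support_iff.mp he
  exact (mul_ne_zero hcoeffe hprod) hG'w0
end

section
/- Let F be a finite field of order q = p^s with characteristic p and s ≥ 1, and let d be an integer with q - q/p - 1 < d < q. Define g : F^2 → F by g(x_1, x_2) = (x_1^{p-1} · x_2)^{q/p}. Then for every x, h ∈ F^2 there exists a univariate polynomial P over F of degree at most d such that P(t) = g(x + t·h) for every t ∈ F; yet g is not the evaluation of any bivariate polynomial over F of total degree at most d. -/
/-- Tightness of the characterization. For a finite field `F` of order
`q = p^s` and any `d` with `q - q/p - 1 < d < q`, the function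
`g(x₁,x₂) = (x₁^(p-1) · x₂)^(q/p)` agrees on every line with a univariate polynomial
of degree at most `d`, yet `g` is not the evaluation of any bivariate polynomial of
total degree at most `d`. -/
theorem total_degree_characterization_tight
    (F : Type) [Field F] [Fintype F]
    (p s : ℕ) (hp : p.Prime) (hs : 1 ≤ s)
    (hcard : Fintype.card F = p ^ s) (hchar : ringChar F = p)
    (d : ℕ) (hd1 : p ^ s - p ^ s / p - 1 < d) (hd2 : d < p ^ s)
    (g : (Fin 2 → F) → F)
    (hg : ∀ y : Fin 2 → F, g y = (y 0 ^ (p - 1) * y 1) ^ (p ^ s / p)) :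
    (∀ x h : Fin 2 → F, ∃ P : Polynomial F, P.natDegree ≤ d ∧
      ∀ t : F, P.eval t = g (x + t • h)) ∧
    ¬ ∃ P : MvPolynomial (Fin 2) F, P.totalDegree ≤ d ∧
      ∀ y : Fin 2 → F, MvPolynomial.eval y P = g y := by
  haveI : CharP F p := hchar ▸ ringChar.charP F
  haveI := Fact.mk hp
  set m : ℕ := p ^ (s - 1) with hm
  have hp2 : 2 ≤ p := hp.two_le
  have hdiv : p ^ s / p = m := by
    simpa [hm] using Nat.pow_div (x := p) hs hp.pos
  have hpm : p * m = p ^ s := by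
    rw [hm, ← pow_succ' p (s - 1), Nat.sub_add_cancel hs]
  have hm1 : 1 ≤ m := Nat.one_le_pow _ _ hp.pos
  have hmle : m ≤ p ^ s := by
    rw [← hpm]; exact Nat.le_mul_of_pos_left m hp.pos
  have hqm : (p - 1) * m = p ^ s - m := by
    rw [Nat.sub_mul, one_mul, hpm]
  have hd3 : p ^ s - m ≤ d := by
    omega
  have h1d : 1 ≤ d := by
    have : 1 ≤ p ^ s - m := by
      have : m < p ^ s := by
        rw [← hpm]; nlinarith
      omega
    omega
  have hmlt : m < p ^ s := by rw [← hpm]; nlinarith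
  constructor
  · -- Part 1: restriction to lines
    intro x h
    set Q : Polynomial F :=
      (Polynomial.C (x 0) + Polynomial.C (h 0) * Polynomial.X) ^ (p - 1) *
        (Polynomial.C (x 1) + Polynomial.C (h 1) * Polynomial.X) with hQ
    have hQdeg : Q.natDegree ≤ p := by
      refine (Polynomial.natDegree_mul_le).trans ?_
      have h1 : (Polynomial.C (x 0) + Polynomial.C (h 0) * Polynomial.X).natDegree ≤ 1 := by
        refine (Polynomial.natDegree_add_le _ _).trans ?_
        simp [Polynomial.natDegree_C_mul_le]
        exact (Polynomial.natDegree_mul_le).trans (by simp)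
      have h2 : (Polynomial.C (x 1) + Polynomial.C (h 1) * Polynomial.X).natDegree ≤ 1 := by
        refine (Polynomial.natDegree_add_le _ _).trans ?_
        simp [Polynomial.natDegree_C_mul_le]
        exact (Polynomial.natDegree_mul_le).trans (by simp)
      calc ((Polynomial.C (x 0) + Polynomial.C (h 0) * Polynomial.X) ^ (p - 1)).natDegree
            + (Polynomial.C (x 1) + Polynomial.C (h 1) * Polynomial.X).natDegree
          ≤ (p - 1) * 1 + 1 := by
            gcongr
            exact (Polynomial.natDegree_pow_le).trans (by nlinarith)
        _ ≤ p := by omega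

    set P : Polynomial F :=
      ∑ k ∈ Finset.range (p + 1),
        Polynomial.C (Q.coeff k ^ m) * Polynomial.X ^ (if k = p then 1 else k * m) with hP
    refine ⟨P, ?_, ?_⟩
    · refine Polynomial.natDegree_sum_le_of_forall_le _ _ fun k hk => ?_
      refine (Polynomial.natDegree_C_mul_X_pow_le _ _).trans ?_
      split_ifs with hkp
      · exact h1d
      · have hk' : k ≤ p - 1 := by
          simp only [Finset.mem_range] at hk; omega
        calc k * m ≤ (p - 1) * m := by gcongr
          _ ≤ d := hqm ▸ hd3
    · intro t
      have hgval : g (x + t • h) = (Q.eval t) ^ m := by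
        rw [hg, hdiv]
        simp [hQ, Pi.add_apply, Pi.smul_apply, smul_eq_mul]
        ring_nf
      rw [hgval]
      have hfrob : ∀ z : F, z ^ m = iterateFrobenius F p (s - 1) z := by
        intro z; rw [iterateFrobenius_def, hm]
      have hev : Q.eval t = ∑ k ∈ Finset.range (p + 1), Q.coeff k * t ^ k :=
        Polynomial.eval_eq_sum_range' (Nat.lt_succ_of_le hQdeg) t
      rw [hfrob, hev, map_sum]
      rw [hP, Polynomial.eval_finset_sum]
      refine Finset.sum_congr rfl fun k hk => ?_
      rw [map_mul, map_pow, ← hfrob, ← hfrob]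
      simp only [Polynomial.eval_mul, Polynomial.eval_C, Polynomial.eval_pow, Polynomial.eval_X]
      congr 1
      rw [← pow_mul]
      split_ifs with hkp
      · rw [hkp, pow_one, hpm, ← hcard, FiniteField.pow_card]
      · rfl
  · -- Part 2: no bivariate polynomial of total degree ≤ d
    rintro ⟨P, hPd, hPe⟩
    classical
    set u : Fin 2 →₀ ℕ := Finsupp.single 0 ((p - 1) * m) + Finsupp.single 1 m with hu
    set Q₀ : MvPolynomial (Fin 2) F := MvPolynomial.monomial u 1 with hQ₀
    have hQ₀eval : ∀ y : Fin 2 → F, MvPolynomial.eval y Q₀ = g y := by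
      intro y
      have hQ₀X : Q₀ = MvPolynomial.X 0 ^ ((p - 1) * m) * MvPolynomial.X 1 ^ m := by
        rw [hQ₀, hu]
        simp [MvPolynomial.X_pow_eq_monomial, MvPolynomial.monomial_mul]
      rw [hQ₀X, hg, hdiv]
      simp [mul_pow, pow_mul]
    have hsub : P - Q₀ = 0 := by
      refine MvPolynomial.eq_zero_of_eval_eq_zero (Fin 2) F (P - Q₀) (fun v => by
        simp [hPe v, hQ₀eval v]) ?_
      refine Submodule.sub_mem _ ?_ ?_
      · rw [MvPolynomial.mem_restrictDegree]
        intro t ht i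
        have h1 : t i ≤ P.totalDegree :=
          (MvPolynomial.monomial_le_degreeOf i ht).trans (MvPolynomial.degreeOf_le_totalDegree P i)
        have : t i ≤ d := h1.trans hPd
        omega
      · rw [MvPolynomial.mem_restrictDegree]
        intro t ht i
        have hts : t = u := by
          have := MvPolynomial.support_monomial (s := u) (a := (1:F))
          rw [hQ₀] at ht
          rw [this] at ht
          simpa using ht
        subst hts
        fin_cases i <;> simp [hu, Finsupp.single_apply, hcard] <;> omega
    have hPQ : P = Q₀ := sub_eq_zero.mp hsub
    have hQ₀deg : Q₀.totalDegree = p ^ s := by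
      have husum : u.sum (fun _ e => e) = (p - 1) * m + m := by
        rw [Finsupp.sum_fintype _ _ (fun _ => rfl), Fin.sum_univ_two]
        simp [hu, Finsupp.single_apply]
      rw [hQ₀, MvPolynomial.totalDegree_monomial _ one_ne_zero, husum]
      omega
    rw [hPQ, hQ₀deg] at hPd
    omega
end

section
/- Let p be a prime, s ≥ 1 an integer, and let n, r be integers with 0 < r ≤ n ≤ p^s - 1. If p^{s-1} divides r, then p does not divide the binomial coefficient C(n, r). -/
/-- Let `p` be a prime, `s ≥ 1`, and `0 < r ≤ n ≤ p^s - 1`.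
If `p^(s-1)` divides `r`, then `p` does not divide `C(n, r)`. -/
theorem binom_not_div
    (p s n r : ℕ) (hp : p.Prime) (hs : 1 ≤ s)
    (hr0 : 0 < r) (hrn : r ≤ n) (hn : n ≤ p ^ s - 1)
    (hdvd : p ^ (s - 1) ∣ r) :
    ¬ p ∣ n.choose r := by
  rw [← emultiplicity_eq_zero]
  rw [hp.emultiplicity_choose hrn (Nat.lt_add_one _)]
  rw [Nat.cast_eq_zero, Finset.card_eq_zero, Finset.filter_eq_empty_iff]
  intro i hi
  rw [Finset.mem_Ico] at hi
  have hnlt : n < p ^ s := lt_of_le_of_lt hn (Nat.sub_lt (pow_pos hp.pos s) one_pos)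
  have hlog : Nat.log p n ≤ s - 1 := by
    rcases Nat.eq_zero_or_pos n with h | h
    · simp [h]
    · have := Nat.log_lt_of_lt_pow h.ne' hnlt
      omega
  have hi' : i ≤ s - 1 := by omega
  have : p ^ i ∣ r := dvd_trans (pow_dvd_pow p hi') hdvd
  push_neg
  have h0 : r % p ^ i = 0 := Nat.mod_eq_zero_of_dvd this
  rw [h0, zero_add]
  exact Nat.mod_lt _ (pow_pos hp.pos i)
end

section
/- Let F be a finite field, m ≥ 1, d ≥ 0, and f : F^m → F. Let Q be any degree-d line polynomial family for f, let δ_f(Q) = Pr_{x,h}[f(x) ≠ Q_{x,h}(0)], and let Corr be any correction function for (f, Q). Then d(f, Corr) ≤ 2·δ_f(Q). -/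
/-- `Q` is a degree-`d` line polynomial family for `f`: each `Q x h` is a univariate
polynomial of degree at most `d` that maximizes, among all univariate polynomials of
degree at most `d`, the number of `t ∈ F` with `Q x h (t) = f (x + t • h)`. -/
def IsLinePolyFamily (F : Type) [Field F] [Fintype F] [DecidableEq F]
    (m d : ℕ) (f : (Fin m → F) → F)
    (Q : (Fin m → F) → (Fin m → F) → Polynomial F) : Prop :=
  ∀ x h : Fin m → F, (Q x h).natDegree ≤ d ∧
    ∀ R : Polynomial F, R.natDegree ≤ d →
      (Finset.univ.filter fun t : F => R.eval t = f (x + t • h)).card ≤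
      (Finset.univ.filter fun t : F => (Q x h).eval t = f (x + t • h)).card

/-- `Corr` is a correction function for `(f, Q)`: for each `x`, `Corr x` is a
plurality value of `{Q x h (0) : h ∈ F^m}`. -/
def IsCorrection (F : Type) [Field F] [Fintype F] [DecidableEq F]
    (m : ℕ) (Q : (Fin m → F) → (Fin m → F) → Polynomial F)
    (Corr : (Fin m → F) → F) : Prop :=
  ∀ (x : Fin m → F) (a : F),
    (Finset.univ.filter fun h : Fin m → F => (Q x h).eval 0 = a).card ≤
    (Finset.univ.filter fun h : Fin m → F => (Q x h).eval 0 = Corr x).card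

/-- `δ_f(Q)`: the fraction of pairs `(x,h) ∈ F^m × F^m` with `f x ≠ Q x h (0)`. -/
noncomputable def lineDelta (F : Type) [Field F] [Fintype F] [DecidableEq F]
    (m : ℕ) (f : (Fin m → F) → F)
    (Q : (Fin m → F) → (Fin m → F) → Polynomial F) : ℝ :=
  ((Finset.univ.filter fun z : (Fin m → F) × (Fin m → F) =>
      f z.1 ≠ (Q z.1 z.2).eval 0).card : ℝ) / (Fintype.card F : ℝ) ^ (2 * m)

/-- `d(f,g)`: the fraction of points `x ∈ F^m` with `f x ≠ g x`. -/
noncomputable def fdist (F : Type) [Field F] [Fintype F] [DecidableEq F]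
    (m : ℕ) (f g : (Fin m → F) → F) : ℝ :=
  ((Finset.univ.filter fun x : Fin m → F => f x ≠ g x).card : ℝ) /
    (Fintype.card F : ℝ) ^ m

/-- For any degree-`d` line polynomial family `Q` for `f` and any
correction function `Corr` for `(f, Q)`, we have `d(f, Corr) ≤ 2·δ_f(Q)`. -/
theorem dist_self_corr_le
    (F : Type) [Field F] [Fintype F] [DecidableEq F]
    (m d : ℕ) (hm : 1 ≤ m)
    (f : (Fin m → F) → F)
    (Q : (Fin m → F) → (Fin m → F) → Polynomial F)
    (hQ : IsLinePolyFamily F m d f Q)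
    (Corr : (Fin m → F) → F)
    (hCorr : IsCorrection F m Q Corr) :
    fdist F m f Corr ≤ 2 * lineDelta F m f Q := by
  classical
  set q := Fintype.card F with hq
  set A := (Finset.univ.filter fun x : Fin m → F => f x ≠ Corr x).card with hA
  set B := (Finset.univ.filter fun z : (Fin m → F) × (Fin m → F) =>
      f z.1 ≠ (Q z.1 z.2).eval 0).card with hB
  have hN : Fintype.card (Fin m → F) = q ^ m := by simp [hq]
  have key : A * q ^ m ≤ 2 * B := by
    have hBsum : B = ∑ x : Fin m → F,
        (Finset.univ.filter fun h : Fin m → F => f x ≠ (Q x h).eval 0).card := by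
      rw [hB, Finset.card_filter, Fintype.sum_prod_type]
      simp [Finset.card_filter]
    have hx : ∀ x ∈ (Finset.univ.filter fun x : Fin m → F => f x ≠ Corr x),
        q ^ m ≤ 2 * (Finset.univ.filter fun h : Fin m → F => f x ≠ (Q x h).eval 0).card := by
      intro x hxmem
      simp only [Finset.mem_filter, Finset.mem_univ, true_and] at hxmem
      have h1 := hCorr x (f x)
      have h2 : (Finset.univ.filter fun h : Fin m → F => (Q x h).eval 0 = Corr x) ⊆
          (Finset.univ.filter fun h : Fin m → F => f x ≠ (Q x h).eval 0) := by
        intro h hh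
        simp only [Finset.mem_filter, Finset.mem_univ, true_and] at hh ⊢
        rw [hh]; exact hxmem
      have h2' := Finset.card_le_card h2
      have h3 : (Finset.univ.filter fun h : Fin m → F => (Q x h).eval 0 = f x).card
          + (Finset.univ.filter fun h : Fin m → F => f x ≠ (Q x h).eval 0).card = q ^ m := by
        rw [← hN]
        have := Finset.card_filter_add_card_filter_not
          (s := (Finset.univ : Finset (Fin m → F)))
          (p := fun h => (Q x h).eval 0 = f x)
        simpa [Finset.card_univ, ne_comm] using this
      omega
    calc A * q ^ m
        = ∑ _x ∈ (Finset.univ.filter fun x : Fin m → F => f x ≠ Corr x), q ^ m := by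
          rw [Finset.sum_const, smul_eq_mul]
      _ ≤ ∑ x ∈ (Finset.univ.filter fun x : Fin m → F => f x ≠ Corr x),
            2 * (Finset.univ.filter fun h : Fin m → F => f x ≠ (Q x h).eval 0).card :=
          Finset.sum_le_sum hx
      _ ≤ ∑ x : Fin m → F,
            2 * (Finset.univ.filter fun h : Fin m → F => f x ≠ (Q x h).eval 0).card :=
          Finset.sum_le_sum_of_subset (Finset.filter_subset _ _)
      _ = 2 * B := by rw [hBsum, Finset.mul_sum]
  have hqR : (0:ℝ) < (q:ℝ) := by exact_mod_cast (Fintype.card_pos : 0 < q)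
  have keyR : (A:ℝ) * (q:ℝ) ^ m ≤ 2 * (B:ℝ) := by exact_mod_cast key
  unfold fdist lineDelta
  rw [← hq, ← hA, ← hB, mul_div_assoc' 2 (B:ℝ) _,
    div_le_div_iff₀ (by positivity) (by positivity)]
  calc (A:ℝ) * (q:ℝ) ^ (2 * m) = ((A:ℝ) * (q:ℝ) ^ m) * (q:ℝ) ^ m := by
        rw [two_mul, pow_add]; ring
    _ ≤ (2 * (B:ℝ)) * (q:ℝ) ^ m := by
        exact mul_le_mul_of_nonneg_right keyR (by positivity)
end

section
/- There exists a constant c such that the following holds. Let F be a finite field, m ≥ 1, d ≥ 0, β > 0, and suppose |F| ≥ c·(d+1)/β. Let g : F^m → F be the evaluation of a polynomial of total degree at most d, let f : F^m → F satisfy d(f, g) < 1/4 - β, let Q be any degree-d line polynomial family for f, and let Corr be any correction function for (f, Q). Then Corr(x) = g(x) for every x ∈ F^m. -/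
open Finset


lemma lineRestrict {F : Type} [Field F] {m d : ℕ} (Pg : MvPolynomial (Fin m) F)
    (hdeg : Pg.totalDegree ≤ d) (x h : Fin m → F) :
    ∃ R : Polynomial F, R.natDegree ≤ d ∧
      ∀ t : F, R.eval t = MvPolynomial.eval (x + t • h) Pg := by
  refine ⟨MvPolynomial.eval₂ Polynomial.C
      (fun i => Polynomial.C (x i) + Polynomial.C (h i) * Polynomial.X) Pg, ?_, ?_⟩
  · rw [MvPolynomial.eval₂_eq]
    refine (Polynomial.natDegree_sum_le _ _).trans ?_
    rw [Finset.fold_max_le]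
    refine ⟨Nat.zero_le _, fun s hs => ?_⟩
    refine (Polynomial.natDegree_mul_le).trans ?_
    rw [Polynomial.natDegree_C]
    simp only [Nat.zero_add]
    refine (Polynomial.natDegree_prod_le _ _).trans ?_
    have key : ∀ i ∈ s.support,
        ((Polynomial.C (x i) + Polynomial.C (h i) * Polynomial.X) ^ s i).natDegree ≤ s i := by
      intro i _
      refine (Polynomial.natDegree_pow_le).trans ?_
      have h1 : (Polynomial.C (x i) + Polynomial.C (h i) * Polynomial.X).natDegree ≤ 1 := by
        refine (Polynomial.natDegree_add_le _ _).trans ?_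
        simp only [Polynomial.natDegree_C, max_le_iff]
        exact ⟨Nat.zero_le _, le_trans Polynomial.natDegree_mul_le (by simp)⟩
      calc s i * _ ≤ s i * 1 := Nat.mul_le_mul_left _ h1
        _ = s i := Nat.mul_one _
    refine le_trans (Finset.sum_le_sum key) (le_trans ?_ hdeg)
    exact MvPolynomial.le_totalDegree hs
  · intro t
    rw [MvPolynomial.eval₂_eq, Polynomial.eval_finset_sum, MvPolynomial.eval_eq]
    refine Finset.sum_congr rfl fun s hs => ?_
    simp only [Polynomial.eval_mul, Polynomial.eval_C, Polynomial.eval_prod,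
      Polynomial.eval_pow, Polynomial.eval_add, Polynomial.eval_X]
    congr 1
    refine Finset.prod_congr rfl fun i _ => ?_
    simp only [Pi.add_apply, Pi.smul_apply, smul_eq_mul]
    ring_nf

lemma agree_card_le {F : Type} [Field F] [Fintype F] [DecidableEq F] {d : ℕ}
    {P R : Polynomial F} (hP : P.natDegree ≤ d) (hR : R.natDegree ≤ d) (hne : P ≠ R) :
    (Finset.univ.filter fun t : F => P.eval t = R.eval t).card ≤ d := by
  have hsub : (Finset.univ.filter fun t : F => P.eval t = R.eval t) ⊆
      (P - R).roots.toFinset := by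
    intro t ht
    simp only [mem_filter, mem_univ, true_and] at ht
    rw [Multiset.mem_toFinset, Polynomial.mem_roots (sub_ne_zero.mpr hne)]
    simp [Polynomial.IsRoot, ht]
  refine (Finset.card_le_card hsub).trans ?_
  refine le_trans (Multiset.toFinset_card_le _) ?_
  refine le_trans (Polynomial.card_roots' _) ?_
  exact le_trans (Polynomial.natDegree_sub_le _ _) (max_le hP hR)

lemma card_shift {F : Type} [Field F] [Fintype F] [DecidableEq F] {m : ℕ}
    (x : Fin m → F) (t : F) (ht : t ≠ 0) (p : (Fin m → F) → Prop) [DecidablePred p] :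
    (Finset.univ.filter fun h : Fin m → F => p (x + t • h)).card =
    (Finset.univ.filter fun y : Fin m → F => p y).card := by
  apply Finset.card_bij (fun h _ => x + t • h)
  · intro h hh; simp only [mem_filter, mem_univ, true_and] at hh ⊢; exact hh
  · intro a ha b hb hab
    have := congrArg (fun y => t⁻¹ • (y - x)) hab
    simpa [smul_smul, inv_mul_cancel₀ ht] using this
  · intro y hy
    refine ⟨t⁻¹ • (y - x), ?_, ?_⟩
    · simp only [mem_filter, mem_univ, true_and] at hy ⊢
      rw [smul_smul, mul_inv_cancel₀ ht, one_smul]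
      simpa using hy
    · rw [smul_smul, mul_inv_cancel₀ ht, one_smul]; abel





/-- There is a constant `c > 0` such that whenever `|F| ≥ c·(d+1)/β`,
`g : F^m → F` is the evaluation of a polynomial of total degree at most `d`,
`f` satisfies `d(f,g) < 1/4 - β`, `Q` is a degree-`d` line polynomial family for `f`,
and `Corr` is a correction function for `(f,Q)`, then `Corr = g` everywhere. -/
theorem corr_eq_poly_of_close :
    ∃ c : ℝ, 0 < c ∧
    ∀ (F : Type) [Field F] [Fintype F] [DecidableEq F] (m d : ℕ) (β : ℝ),
      1 ≤ m → 0 < β → c * ((d : ℝ) + 1) / β ≤ (Fintype.card F : ℝ) →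
      ∀ (g f : (Fin m → F) → F),
        (∃ Pg : MvPolynomial (Fin m) F, Pg.totalDegree ≤ d ∧
          ∀ y : Fin m → F, MvPolynomial.eval y Pg = g y) →
        fdist F m f g < 1 / 4 - β →
      ∀ (Q : (Fin m → F) → (Fin m → F) → Polynomial F),
        IsLinePolyFamily F m d f Q →
      ∀ (Corr : (Fin m → F) → F),
        IsCorrection F m Q Corr →
      ∀ x : Fin m → F, Corr x = g x := by
  classical
  refine ⟨3, by norm_num, ?_⟩
  intro F _ _ _ m d β hm hβ hcard g f ⟨Pg, hPdeg, hPg⟩ hdist Q hQ Corr hCorr x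
  set q : ℕ := Fintype.card F with hqdef
  have hq1 : 1 ≤ q := Fintype.card_pos
  have hqR0 : (0:ℝ) < (q:ℝ) := by exact_mod_cast hq1
  have hpow : (0:ℝ) < (q:ℝ) ^ m := pow_pos hqR0 m
  -- basic real facts
  have hfd0 : 0 ≤ fdist F m f g := by
    unfold fdist; positivity
  have hβ4 : β < 1/4 := by linarith
  have hβq : 3 * ((d:ℝ) + 1) ≤ β * q := by
    rw [div_le_iff₀ hβ] at hcard
    linarith
  have hdq : d < q := by
    have : (d:ℝ) < (q:ℝ) := by nlinarith
    exact_mod_cast this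
  -- the disagreement count
  set D : ℕ := (Finset.univ.filter fun y : Fin m → F => f y ≠ g y).card with hDdef
  have hD : (D:ℝ) < (1/4 - β) * (q:ℝ)^m := by
    have := hdist
    unfold fdist at this
    rw [div_lt_iff₀ hpow] at this
    exact this
  -- choose line restrictions of g
  have hRex : ∀ h : Fin m → F, ∃ R : Polynomial F, R.natDegree ≤ d ∧
      ∀ t : F, R.eval t = g (x + t • h) := by
    intro h
    obtain ⟨R, h1, h2⟩ := lineRestrict Pg hPdeg x h
    exact ⟨R, h1, fun t => by rw [h2, hPg]⟩
  choose R hRdeg hReval using hRex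
  -- bad set
  set Bad : Finset (Fin m → F) := Finset.univ.filter (fun h => Q x h ≠ R h) with hBadDef
  set B : (Fin m → F) → ℕ :=
    fun h => (Finset.univ.filter fun t : F => f (x + t • h) ≠ g (x + t • h)).card with hBdef
  -- Step 1: h bad implies many disagreements on the line
  have step1 : ∀ h ∈ Bad, q ≤ d + 2 * B h := by
    intro h hh
    simp only [hBadDef, mem_filter, mem_univ, true_and] at hh
    set Bset := Finset.univ.filter fun t : F => f (x + t • h) ≠ g (x + t • h) with hBset
    set AR := Finset.univ.filter fun t : F => (R h).eval t = f (x + t • h) with hAR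
    set AQ := Finset.univ.filter fun t : F => (Q x h).eval t = f (x + t • h) with hAQ
    have h1 : q ≤ AR.card + Bset.card := by
      have hsub : (Finset.univ : Finset F) ⊆ AR ∪ Bset := by
        intro t _
        rcases eq_or_ne (f (x + t • h)) (g (x + t • h)) with he | he
        · exact mem_union_left _ (by simp [hAR, hReval h t, he])
        · exact mem_union_right _ (by simp [hBset, he])
      calc q = (Finset.univ : Finset F).card := (Finset.card_univ).symm
        _ ≤ (AR ∪ Bset).card := Finset.card_le_card hsub
        _ ≤ AR.card + Bset.card := Finset.card_union_le _ _
    have h2 : AR.card ≤ AQ.card := (hQ x h).2 (R h) (hRdeg h)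
    have h3 : AQ.card ≤ d + Bset.card := by
      have hsub : AQ ⊆ (Finset.univ.filter fun t : F =>
          (Q x h).eval t = (R h).eval t) ∪ Bset := by
        intro t ht
        simp only [hAQ, mem_filter, mem_univ, true_and] at ht
        rcases eq_or_ne (f (x + t • h)) (g (x + t • h)) with he | he
        · refine mem_union_left _ ?_
          simp only [mem_filter, mem_univ, true_and]
          rw [ht, hReval h t, he]
        · exact mem_union_right _ (by simp [hBset, he])
      calc AQ.card ≤ _ := Finset.card_le_card hsub
        _ ≤ _ + Bset.card := Finset.card_union_le _ _
        _ ≤ d + Bset.card := by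
            exact Nat.add_le_add_right (agree_card_le (hQ x h).1 (hRdeg h) hh) _
    have : B h = Bset.card := rfl
    omega
  -- Step 2: total disagreements bound
  have hcardfun : Fintype.card (Fin m → F) = q ^ m := by
    simp [Fintype.card_fun, hqdef]
  have step2 : ∑ h : Fin m → F, B h ≤ (q - 1) * D + q ^ m := by
    set T : Finset F := Finset.univ.erase 0 with hT
    have hTcard : T.card = q - 1 := by
      simp [hT, Finset.card_erase_of_mem, hqdef]
    have hsplit : ∀ h : Fin m → F, B h ≤
        (T.filter fun t : F => f (x + t • h) ≠ g (x + t • h)).card + 1 := by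
      intro h
      have hsub : (Finset.univ.filter fun t : F => f (x + t • h) ≠ g (x + t • h)) ⊆
          insert (0:F) (T.filter fun t : F => f (x + t • h) ≠ g (x + t • h)) := by
        intro t ht
        rcases eq_or_ne t 0 with rfl | ht0
        · exact Finset.mem_insert_self _ _
        · refine Finset.mem_insert_of_mem ?_
          simp only [mem_filter, mem_univ, true_and, hT, Finset.mem_erase] at ht ⊢
          exact ⟨⟨ht0, trivial⟩, ht⟩
      calc B h ≤ _ := Finset.card_le_card hsub
        _ ≤ _ + 1 := Finset.card_insert_le _ _
    have hsum : ∑ h : Fin m → F,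
        (T.filter fun t : F => f (x + t • h) ≠ g (x + t • h)).card = (q - 1) * D := by
      simp only [Finset.card_filter]
      rw [Finset.sum_comm]
      have : ∀ t ∈ T, (∑ h : Fin m → F,
          if f (x + t • h) ≠ g (x + t • h) then 1 else 0) = D := by
        intro t ht
        have ht0 : t ≠ 0 := (Finset.mem_erase.mp ht).1
        rw [← Finset.card_filter]
        exact card_shift x t ht0 (fun y => f y ≠ g y)
      rw [Finset.sum_congr rfl this, Finset.sum_const, hTcard, smul_eq_mul]
    calc ∑ h : Fin m → F, B h
        ≤ ∑ h : Fin m → F, ((T.filter fun t : F =>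
            f (x + t • h) ≠ g (x + t • h)).card + 1) := Finset.sum_le_sum fun h _ => hsplit h
      _ = (q - 1) * D + q ^ m := by
          rw [Finset.sum_add_distrib, hsum, Finset.sum_const, Finset.card_univ,
            hcardfun, smul_eq_mul, mul_one]
  -- Step 3: bad set is small (nat)
  have step3 : Bad.card * (q - d) ≤ 2 * ((q - 1) * D + q ^ m) := by
    have h1 : Bad.card * (q - d) ≤ ∑ h ∈ Bad, 2 * B h := by
      calc Bad.card * (q - d) = ∑ _h ∈ Bad, (q - d) := by
            rw [Finset.sum_const, smul_eq_mul]
        _ ≤ ∑ h ∈ Bad, 2 * B h := Finset.sum_le_sum fun h hh => by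
            have := step1 h hh; omega
    have h2 : ∑ h ∈ Bad, 2 * B h ≤ 2 * ∑ h : Fin m → F, B h := by
      rw [Finset.mul_sum]
      exact Finset.sum_le_sum_of_subset (Finset.subset_univ _)
    exact h1.trans (h2.trans (Nat.mul_le_mul_left 2 step2))
  -- Step 4: in the reals, 2 * |Bad| < q^m
  have step4 : 2 * Bad.card < q ^ m := by
    have hc1 : (Bad.card : ℝ) * ((q:ℝ) - d) ≤ 2 * (((q:ℝ) - 1) * D + (q:ℝ)^m) := by
      have := step3
      have hcast : ((Bad.card * (q - d) : ℕ) : ℝ) ≤ ((2 * ((q - 1) * D + q ^ m) : ℕ) : ℝ) := by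
        exact_mod_cast this
      push_cast [Nat.cast_sub hdq.le, Nat.cast_sub hq1] at hcast
      linarith
    have hqd : (0:ℝ) < (q:ℝ) - d := by
      have : (d:ℝ) < (q:ℝ) := by exact_mod_cast hdq
      linarith
    have hq1R : (1:ℝ) ≤ (q:ℝ) := by exact_mod_cast hq1
    have hD0 : (0:ℝ) ≤ (D:ℝ) := Nat.cast_nonneg _
    have key : (d:ℝ) + 3 ≤ 4 * β * ((q:ℝ) - 1) := by nlinarith
    have hc2 : 2 * (2 * (((q:ℝ) - 1) * D + (q:ℝ)^m)) < (q:ℝ)^m * ((q:ℝ) - d) := by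
      nlinarith [mul_le_mul_of_nonneg_left hD.le (by linarith : (0:ℝ) ≤ 4 * ((q:ℝ) - 1)),
        mul_pos hpow hqd]
    have : 2 * (Bad.card : ℝ) * ((q:ℝ) - d) < (q:ℝ)^m * ((q:ℝ) - d) := by linarith
    have hlt : 2 * (Bad.card : ℝ) < (q:ℝ)^m := by
      have := lt_of_mul_lt_mul_right this hqd.le
      exact this
    exact_mod_cast hlt
  -- Step 5: good set is large
  set Good : Finset (Fin m → F) :=
    Finset.univ.filter (fun h => (Q x h).eval 0 = g x) with hGoodDef
  have hcompl : (Finset.univ : Finset (Fin m → F)) ⊆ Good ∪ Bad := by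
    intro h _
    rcases eq_or_ne (Q x h) (R h) with he | he
    · refine mem_union_left _ ?_
      simp only [hGoodDef, mem_filter, mem_univ, true_and]
      rw [he]
      have := hReval h 0
      rwa [zero_smul, add_zero] at this
    · exact mem_union_right _ (by simp [hBadDef, he])
  have hGB : q ^ m ≤ Good.card + Bad.card := by
    calc q ^ m = (Finset.univ : Finset (Fin m → F)).card := by
          rw [Finset.card_univ, hcardfun]
      _ ≤ (Good ∪ Bad).card := Finset.card_le_card hcompl
      _ ≤ Good.card + Bad.card := Finset.card_union_le _ _
  have hGood2 : q ^ m < 2 * Good.card := by omega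
  -- Step 6: conclude
  by_contra hne
  set CS : Finset (Fin m → F) :=
    Finset.univ.filter (fun h : Fin m → F => (Q x h).eval 0 = Corr x) with hCSdef
  have hdisj : Disjoint Good CS := by
    rw [Finset.disjoint_left]
    intro h hG hC
    simp only [hGoodDef, hCSdef, mem_filter, mem_univ, true_and] at hG hC
    exact hne (hC ▸ hG)
  have hsum : Good.card + CS.card ≤ q ^ m := by
    rw [← Finset.card_union_of_disjoint hdisj]
    calc (Good ∪ CS).card ≤ (Finset.univ : Finset (Fin m → F)).card :=
          Finset.card_le_card (Finset.subset_univ _)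
      _ = q ^ m := by rw [Finset.card_univ, hcardfun]
  have hple : Good.card ≤ CS.card := hCorr x (g x)
  omega
end

section
/- For all β > 0 and γ > 0 there exists a constant c such that the following holds for all integers d ≥ 0, m ≥ 1, and every finite field F with |F| ≥ c·(d+1). Let g : F^m → F be the evaluation of a polynomial of total degree at most d, let f : F^m → F satisfy d(f, g) < 1/2 - β, let Q be any degree-d line polynomial family for f, and let Corr be any correction function for (f, Q). Then d(Corr, g) ≤ γ. -/
set_option linter.unusedSectionVars false
set_option maxHeartbeats 1000000

section AuxCCHC
variable {F : Type} [Field F] [Fintype F] [DecidableEq F] {m : ℕ}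

/-- restriction of a multivariate polynomial to a line -/
private lemma cchc_line_poly (d : ℕ) (P : MvPolynomial (Fin m) F) (hP : P.totalDegree ≤ d)
    (x h : Fin m → F) :
    ∃ R : Polynomial F, R.natDegree ≤ d ∧
      ∀ t : F, R.eval t = MvPolynomial.eval (x + t • h) P := by
  refine ⟨MvPolynomial.eval₂ Polynomial.C
      (fun i => Polynomial.C (x i) + Polynomial.C (h i) * Polynomial.X) P, ?_, ?_⟩
  · rw [MvPolynomial.eval₂_eq]
    apply Polynomial.natDegree_sum_le_of_forall_le
    intro s hs
    refine Polynomial.natDegree_mul_le.trans ?_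
    rw [Polynomial.natDegree_C, zero_add]
    refine (Polynomial.natDegree_prod_le _ _).trans ?_
    have h1 : ∀ i ∈ s.support,
        ((Polynomial.C (x i) + Polynomial.C (h i) * Polynomial.X) ^ s i).natDegree ≤ s i := by
      intro i _
      refine (Polynomial.natDegree_pow_le).trans ?_
      have : (Polynomial.C (x i) + Polynomial.C (h i) * Polynomial.X).natDegree ≤ 1 := by
        refine (Polynomial.natDegree_add_le _ _).trans ?_
        simp only [Polynomial.natDegree_C, max_le_iff]
        exact ⟨Nat.zero_le _, Polynomial.natDegree_mul_le.trans
          (by simp [Polynomial.natDegree_X_le])⟩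
      calc s i * (Polynomial.C (x i) + Polynomial.C (h i) * Polynomial.X).natDegree
          ≤ s i * 1 := Nat.mul_le_mul_left _ this
        _ = s i := Nat.mul_one _
    refine (Finset.sum_le_sum h1).trans ?_
    exact (MvPolynomial.le_totalDegree hs).trans hP
  · intro t
    rw [show Polynomial.eval t (MvPolynomial.eval₂ Polynomial.C
        (fun i => Polynomial.C (x i) + Polynomial.C (h i) * Polynomial.X) P)
      = (Polynomial.evalRingHom t) (MvPolynomial.eval₂ Polynomial.C
        (fun i => Polynomial.C (x i) + Polynomial.C (h i) * Polynomial.X) P) from rfl]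
    rw [MvPolynomial.eval₂_comp_left]
    rw [show (Polynomial.evalRingHom t).comp Polynomial.C = RingHom.id F from
      RingHom.ext fun a => Polynomial.eval_C]
    rw [MvPolynomial.eval₂_id]
    have : ((Polynomial.evalRingHom t) ∘ fun i =>
        Polynomial.C (x i) + Polynomial.C (h i) * Polynomial.X) = x + t • h := by
      funext i
      simp only [Function.comp_apply, Polynomial.coe_evalRingHom, Polynomial.eval_add,
        Polynomial.eval_mul, Polynomial.eval_C, Polynomial.eval_X, Pi.add_apply,
        Pi.smul_apply, smul_eq_mul]
      ring
    rw [this]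

/-- two distinct polynomials of degree ≤ d agree on at most d points -/
private lemma cchc_agree_card (d : ℕ) {P R : Polynomial F} (hP : P.natDegree ≤ d)
    (hR : R.natDegree ≤ d) (hne : P ≠ R) :
    (Finset.univ.filter fun t : F => P.eval t = R.eval t).card ≤ d := by
  have h0 : P - R ≠ 0 := sub_ne_zero.mpr hne
  have hsub : (Finset.univ.filter fun t : F => P.eval t = R.eval t).val ⊆ (P - R).roots := by
    intro t ht
    simp only [Finset.mem_val, Finset.mem_filter] at ht
    rw [Polynomial.mem_roots h0]
    simp [Polynomial.IsRoot, sub_eq_zero, ht.2]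
  exact (Polynomial.card_le_degree_of_subset_roots hsub).trans
    ((Polynomial.natDegree_sub_le P R).trans (by omega))

private lemma cchc_card_shift (B : Finset (Fin m → F)) (t : F) :
    (Finset.univ.filter fun z : (Fin m → F) × (Fin m → F) => z.1 + t • z.2 ∈ B).card
      = B.card * Fintype.card (Fin m → F) := by
  rw [← Finset.card_univ, ← Finset.card_product]
  apply Finset.card_bij' (fun z _ => (z.1 + t • z.2, z.2)) (fun w _ => (w.1 - t • w.2, w.2))
  · intro z hz
    simp
  · intro w hw
    simp
  · intro z hz
    simp only [Finset.mem_filter] at hz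
    simp [Finset.mem_product, hz.2]
  · intro w hw
    simp only [Finset.mem_product] at hw
    simp [hw.1]

private lemma cchc_card_pair2 (B : Finset (Fin m → F)) {t t' : F} (hne : t ≠ t') :
    (Finset.univ.filter fun z : (Fin m → F) × (Fin m → F) =>
        z.1 + t • z.2 ∈ B ∧ z.1 + t' • z.2 ∈ B).card = B.card * B.card := by
  have hd : t' - t ≠ 0 := sub_ne_zero.mpr (Ne.symm hne)
  have key1 : ∀ u v : Fin m → F,
      u - t • ((t' - t)⁻¹ • (v - u)) + t • ((t' - t)⁻¹ • (v - u)) = u := by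
    intro u v; funext i
    simp only [Pi.add_apply, Pi.sub_apply, Pi.smul_apply, smul_eq_mul]
    ring
  have key2 : ∀ u v : Fin m → F,
      u - t • ((t' - t)⁻¹ • (v - u)) + t' • ((t' - t)⁻¹ • (v - u)) = v := by
    intro u v; funext i
    simp only [Pi.add_apply, Pi.sub_apply, Pi.smul_apply, smul_eq_mul]
    field_simp
    ring
  rw [← Finset.card_product]
  apply Finset.card_bij' (fun z _ => (z.1 + t • z.2, z.1 + t' • z.2))
    (fun w _ => (w.1 - t • ((t' - t)⁻¹ • (w.2 - w.1)), (t' - t)⁻¹ • (w.2 - w.1)))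
  · intro z hz
    obtain ⟨x, h⟩ := z
    simp only [Prod.mk.injEq]
    have hh : (t' - t)⁻¹ • ((x + t' • h) - (x + t • h)) = h := by
      funext i
      simp only [Pi.add_apply, Pi.sub_apply, Pi.smul_apply, smul_eq_mul]
      field_simp
      ring
    constructor
    · rw [hh]
      funext i
      simp only [Pi.add_apply, Pi.sub_apply, Pi.smul_apply, smul_eq_mul]
      ring
    · exact hh
  · intro w hw
    obtain ⟨u, v⟩ := w
    simp only [Prod.mk.injEq]
    exact ⟨key1 u v, key2 u v⟩
  · intro z hz
    simp only [Finset.mem_filter] at hz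
    simp [Finset.mem_product, hz.2.1, hz.2.2]
  · intro w hw
    simp only [Finset.mem_product] at hw
    simp only [Finset.mem_filter, Finset.mem_univ, true_and]
    rw [key1 w.1 w.2, key2 w.1 w.2]
    exact ⟨hw.1, hw.2⟩

private lemma cchc_sum_D (B : Finset (Fin m → F)) :
    ∑ z : (Fin m → F) × (Fin m → F),
      ((Finset.univ.filter fun t : F => z.1 + t • z.2 ∈ B).card : ℝ)
      = (Fintype.card F : ℝ) * B.card * Fintype.card (Fin m → F) := by
  have h1 : ∀ z : (Fin m → F) × (Fin m → F),
      ((Finset.univ.filter fun t : F => z.1 + t • z.2 ∈ B).card : ℝ)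
        = ∑ t : F, if z.1 + t • z.2 ∈ B then (1:ℝ) else 0 := by
    intro z
    rw [Finset.sum_boole]
  rw [Finset.sum_congr rfl fun z _ => h1 z, Finset.sum_comm]
  have h2 : ∀ t : F,
      (∑ z : (Fin m → F) × (Fin m → F), if z.1 + t • z.2 ∈ B then (1:ℝ) else 0)
        = (B.card : ℝ) * Fintype.card (Fin m → F) := by
    intro t
    rw [Finset.sum_boole, cchc_card_shift B t]
    push_cast
    ring
  rw [Finset.sum_congr rfl fun t _ => h2 t, Finset.sum_const, Finset.card_univ]
  push_cast
  ring

private lemma cchc_sum_D_sq (B : Finset (Fin m → F)) :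
    ∑ z : (Fin m → F) × (Fin m → F),
      ((Finset.univ.filter fun t : F => z.1 + t • z.2 ∈ B).card : ℝ) ^ 2
      = (Fintype.card F : ℝ) * B.card * Fintype.card (Fin m → F)
        + (Fintype.card F : ℝ) * ((Fintype.card F : ℝ) - 1) * B.card ^ 2 := by
  have h1 : ∀ z : (Fin m → F) × (Fin m → F),
      ((Finset.univ.filter fun t : F => z.1 + t • z.2 ∈ B).card : ℝ) ^ 2
        = ∑ t : F, ∑ t' : F,
            if z.1 + t • z.2 ∈ B ∧ z.1 + t' • z.2 ∈ B then (1:ℝ) else 0 := by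
    intro z
    have : ((Finset.univ.filter fun t : F => z.1 + t • z.2 ∈ B).card : ℝ)
        = ∑ t : F, if z.1 + t • z.2 ∈ B then (1:ℝ) else 0 := by rw [Finset.sum_boole]
    rw [sq, this, Finset.sum_mul_sum]
    refine Finset.sum_congr rfl fun t _ => Finset.sum_congr rfl fun t' _ => ?_
    by_cases hA : z.1 + t • z.2 ∈ B <;> by_cases hB : z.1 + t' • z.2 ∈ B <;>
      simp [hA, hB]
  rw [Finset.sum_congr rfl fun z _ => h1 z, Finset.sum_comm]
  have h2 : ∀ t : F,
      (∑ z : (Fin m → F) × (Fin m → F), ∑ t' : F,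
          if z.1 + t • z.2 ∈ B ∧ z.1 + t' • z.2 ∈ B then (1:ℝ) else 0)
        = (B.card : ℝ) * Fintype.card (Fin m → F)
          + ((Fintype.card F : ℝ) - 1) * B.card ^ 2 := by
    intro t
    rw [Finset.sum_comm]
    have h3 : ∀ t' : F,
        (∑ z : (Fin m → F) × (Fin m → F),
            if z.1 + t • z.2 ∈ B ∧ z.1 + t' • z.2 ∈ B then (1:ℝ) else 0)
          = if t' = t then (B.card : ℝ) * Fintype.card (Fin m → F)
            else (B.card : ℝ) ^ 2 := by
      intro t'
      rw [Finset.sum_boole]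
      by_cases ht : t' = t
      · subst ht
        rw [if_pos rfl]
        rw [show (Finset.univ.filter fun z : (Fin m → F) × (Fin m → F) =>
            z.1 + t' • z.2 ∈ B ∧ z.1 + t' • z.2 ∈ B)
          = Finset.univ.filter fun z : (Fin m → F) × (Fin m → F) =>
            z.1 + t' • z.2 ∈ B by simp]
        rw [cchc_card_shift B t']
        push_cast; ring
      · rw [if_neg ht, cchc_card_pair2 B (Ne.symm ht)]
        push_cast; ring
    rw [Finset.sum_congr rfl fun t' _ => h3 t']
    have h4 : ∀ t' : F,
        (if t' = t then (B.card : ℝ) * Fintype.card (Fin m → F) else (B.card : ℝ) ^ 2)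
          = (B.card : ℝ) ^ 2 + (if t' = t then
              (B.card : ℝ) * Fintype.card (Fin m → F) - (B.card : ℝ) ^ 2 else 0) := by
      intro t'; split_ifs <;> ring
    rw [Finset.sum_congr rfl fun t' _ => h4 t', Finset.sum_add_distrib,
      Finset.sum_const, Finset.card_univ,
      Finset.sum_ite_eq' Finset.univ t
        (fun _ => (B.card : ℝ) * Fintype.card (Fin m → F) - (B.card : ℝ) ^ 2),
      if_pos (Finset.mem_univ t)]
    ring
  rw [Finset.sum_congr rfl fun t _ => h2 t, Finset.sum_const, Finset.card_univ]
  push_cast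
  ring

end AuxCCHC

/-- For all `β > 0` and `γ > 0` there is a constant `c > 0` such that
for all `d ≥ 0`, `m ≥ 1` and finite fields `F` with `|F| ≥ c·(d+1)`: if `g` is the
evaluation of a polynomial of total degree at most `d`, `f` satisfies
`d(f,g) < 1/2 - β`, `Q` is a degree-`d` line polynomial family for `f`, and `Corr`
is a correction function for `(f,Q)`, then `d(Corr, g) ≤ γ`. -/
theorem corr_close_of_half_close (β γ : ℝ) (hβ : 0 < β) (hγ : 0 < γ) :
    ∃ c : ℝ, 0 < c ∧
    ∀ (F : Type) [Field F] [Fintype F] [DecidableEq F] (d m : ℕ),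
      1 ≤ m → c * ((d : ℝ) + 1) ≤ (Fintype.card F : ℝ) →
      ∀ (g f : (Fin m → F) → F),
        (∃ Pg : MvPolynomial (Fin m) F, Pg.totalDegree ≤ d ∧
          ∀ y : Fin m → F, MvPolynomial.eval y Pg = g y) →
        fdist F m f g < 1 / 2 - β →
      ∀ (Q : (Fin m → F) → (Fin m → F) → Polynomial F),
        IsLinePolyFamily F m d f Q →
      ∀ (Corr : (Fin m → F) → F),
        IsCorrection F m Q Corr →
      fdist F m Corr g ≤ γ := by
  refine ⟨1/β + 2/(β^2*γ) + 1, by positivity, ?_⟩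
  intro F _ _ _ d m hm hcard g f hg hfg Q hQ Corr hCorr
  obtain ⟨Pg, hPgdeg, hPg⟩ := hg
  classical
  -- notation
  set B : Finset (Fin m → F) := Finset.univ.filter fun y => f y ≠ g y with hB
  have hq0 : (0:ℝ) < (Fintype.card F : ℝ) := by
    exact_mod_cast Fintype.card_pos
  have hN0 : (0:ℝ) < (Fintype.card (Fin m → F) : ℝ) := by
    exact_mod_cast Fintype.card_pos
  have hNval : ((Fintype.card (Fin m → F) : ℝ)) = (Fintype.card F : ℝ) ^ m := by
    rw [Fintype.card_fun]
    push_cast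
    rw [Fintype.card_fin]
  -- basic bounds on b := |B|
  have hbN : (B.card : ℝ) ≤ (Fintype.card (Fin m → F) : ℝ) := by
    exact_mod_cast Finset.card_le_univ B
  have hb0 : (0:ℝ) ≤ (B.card : ℝ) := Nat.cast_nonneg _
  have hbineq : (B.card : ℝ) < (1/2 - β) * (Fintype.card (Fin m → F) : ℝ) := by
    have : fdist F m f g = (B.card : ℝ) / (Fintype.card (Fin m → F) : ℝ) := by
      rw [fdist, hNval]
    rw [this, div_lt_iff₀ hN0] at hfg
    linarith
  -- field size bounds
  have hcpos : (0:ℝ) < 1/β + 2/(β^2*γ) + 1 := by positivity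
  have hd1 : (d:ℝ) + 1 ≤ β * (Fintype.card F : ℝ) := by
    have h1 : (1/β) * ((d:ℝ)+1) ≤ (1/β + 2/(β^2*γ) + 1) * ((d:ℝ)+1) := by
      have : (0:ℝ) ≤ 2/(β^2*γ) + 1 := by positivity
      have hd0 : (0:ℝ) ≤ (d:ℝ) + 1 := by positivity
      nlinarith
    have h2 : (1/β) * ((d:ℝ)+1) ≤ (Fintype.card F : ℝ) := le_trans h1 hcard
    rw [div_mul_eq_mul_div, one_mul, div_le_iff₀ hβ] at h2
    linarith [mul_comm β (Fintype.card F : ℝ) ▸ h2]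
  have hq2 : 2/(β^2*γ) ≤ (Fintype.card F : ℝ) := by
    have hd0 : (1:ℝ) ≤ (d:ℝ) + 1 := by
      have : (0:ℝ) ≤ (d:ℝ) := Nat.cast_nonneg d
      linarith
    have hmul : (1/β + 2/(β^2*γ) + 1) * 1 ≤ (1/β + 2/(β^2*γ) + 1) * ((d:ℝ)+1) :=
      mul_le_mul_of_nonneg_left hd0 (le_of_lt hcpos)
    have hbb : (0:ℝ) < 1/β := by positivity
    linarith [hcard, hmul]
  -- STEP 1: bad pairs have many line disagreements
  have key : ∀ x h : Fin m → F, (Q x h).eval 0 ≠ g x →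
      Fintype.card F ≤ 2 * (Finset.univ.filter fun t : F => x + t • h ∈ B).card + d := by
    intro x h hbad
    obtain ⟨R, hRdeg, hRval⟩ := cchc_line_poly d Pg hPgdeg x h
    have hRg : ∀ t : F, R.eval t = g (x + t • h) := fun t => by rw [hRval t, hPg]
    have hQd := (hQ x h).1
    have hmax := (hQ x h).2 R hRdeg
    have hne : Q x h ≠ R := by
      intro hEq
      apply hbad
      rw [hEq, hRg 0]
      congr 1
      rw [zero_smul, add_zero]
    have hint : ((Finset.univ.filter fun t : F => (Q x h).eval t = f (x + t • h)) ∩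
        (Finset.univ.filter fun t : F => R.eval t = f (x + t • h))).card ≤ d := by
      refine le_trans (Finset.card_le_card ?_) (cchc_agree_card d hQd hRdeg hne)
      intro t ht
      simp only [Finset.mem_inter, Finset.mem_filter, Finset.mem_univ, true_and] at ht ⊢
      rw [ht.1, ht.2]
    have huni : ((Finset.univ.filter fun t : F => (Q x h).eval t = f (x + t • h)) ∪
        (Finset.univ.filter fun t : F => R.eval t = f (x + t • h))).card ≤ Fintype.card F := by
      simpa using Finset.card_le_univ
        ((Finset.univ.filter fun t : F => (Q x h).eval t = f (x + t • h)) ∪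
         (Finset.univ.filter fun t : F => R.eval t = f (x + t • h)))
    have hsum := Finset.card_union_add_card_inter
      (Finset.univ.filter fun t : F => (Q x h).eval t = f (x + t • h))
      (Finset.univ.filter fun t : F => R.eval t = f (x + t • h))
    have hcompl : (Finset.univ.filter fun t : F => x + t • h ∈ B).card +
        (Finset.univ.filter fun t : F => R.eval t = f (x + t • h)).card
        = Fintype.card F := by
      have heq : (Finset.univ.filter fun t : F => R.eval t = f (x + t • h))
          = Finset.univ.filter fun t : F => ¬ (x + t • h ∈ B) := by
        ext t
        simp only [Finset.mem_filter, Finset.mem_univ, true_and, hB, ne_eq, not_not,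
          hRg t]
        constructor
        · intro hh; exact hh.symm
        · intro hh; exact hh.symm
      rw [heq, Finset.card_filter_add_card_filter_not, Finset.card_univ]
    omega
  -- STEP 2: variance identity
  have hvar : ∑ z : (Fin m → F) × (Fin m → F),
      ((Fintype.card (Fin m → F) : ℝ) *
          ((Finset.univ.filter fun t : F => z.1 + t • z.2 ∈ B).card : ℝ)
        - (Fintype.card F : ℝ) * B.card) ^ 2
      = (Fintype.card F : ℝ) * B.card * (Fintype.card (Fin m → F) : ℝ) ^ 2 *
          ((Fintype.card (Fin m → F) : ℝ) - B.card) := by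
    have hexp : ∀ z : (Fin m → F) × (Fin m → F),
        ((Fintype.card (Fin m → F) : ℝ) *
            ((Finset.univ.filter fun t : F => z.1 + t • z.2 ∈ B).card : ℝ)
          - (Fintype.card F : ℝ) * B.card) ^ 2
        = (Fintype.card (Fin m → F) : ℝ)^2 *
            ((Finset.univ.filter fun t : F => z.1 + t • z.2 ∈ B).card : ℝ)^2
          - 2 * (Fintype.card F : ℝ) * B.card * (Fintype.card (Fin m → F) : ℝ) *
            ((Finset.univ.filter fun t : F => z.1 + t • z.2 ∈ B).card : ℝ)
          + ((Fintype.card F : ℝ) * B.card)^2 := fun z => by ring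
    rw [Finset.sum_congr rfl fun z _ => hexp z]
    rw [Finset.sum_add_distrib, Finset.sum_sub_distrib, ← Finset.mul_sum, ← Finset.mul_sum,
      Finset.sum_const, Finset.card_univ, Fintype.card_prod,
      cchc_sum_D B, cchc_sum_D_sq B]
    push_cast
    ring
  -- STEP 3: bound on bad pair count
  set Bad : Finset ((Fin m → F) × (Fin m → F)) :=
    Finset.univ.filter fun z => (Q z.1 z.2).eval 0 ≠ g z.1 with hBad
  have hlow : ∀ z ∈ Bad,
      ((Fintype.card (Fin m → F) : ℝ) * β * (Fintype.card F : ℝ) / 2) ^ 2 ≤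
      ((Fintype.card (Fin m → F) : ℝ) *
          ((Finset.univ.filter fun t : F => z.1 + t • z.2 ∈ B).card : ℝ)
        - (Fintype.card F : ℝ) * B.card) ^ 2 := by
    intro z hz
    simp only [hBad, Finset.mem_filter, Finset.mem_univ, true_and] at hz
    have hk := key z.1 z.2 hz
    have hkR : (Fintype.card F : ℝ) ≤
        2 * ((Finset.univ.filter fun t : F => z.1 + t • z.2 ∈ B).card : ℝ) + d := by
      exact_mod_cast hk
    have hbase : (Fintype.card (Fin m → F) : ℝ) * β * (Fintype.card F : ℝ) / 2 ≤
        (Fintype.card (Fin m → F) : ℝ) *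
          ((Finset.univ.filter fun t : F => z.1 + t • z.2 ∈ B).card : ℝ)
        - (Fintype.card F : ℝ) * B.card := by
      nlinarith [hbineq, hq0, hN0, hd1, hkR]
    have hbase0 : (0:ℝ) ≤ (Fintype.card (Fin m → F) : ℝ) * β * (Fintype.card F : ℝ) / 2 := by
      positivity
    nlinarith [hbase, hbase0]
  have hBadcard : (Bad.card : ℝ) *
      ((Fintype.card (Fin m → F) : ℝ) * β * (Fintype.card F : ℝ) / 2) ^ 2 ≤
      (Fintype.card F : ℝ) * ((Fintype.card (Fin m → F) : ℝ)^2/4) *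
        (Fintype.card (Fin m → F) : ℝ) ^ 2 := by
    have h1 : (Bad.card : ℝ) *
        ((Fintype.card (Fin m → F) : ℝ) * β * (Fintype.card F : ℝ) / 2) ^ 2
        ≤ ∑ z ∈ Bad, ((Fintype.card (Fin m → F) : ℝ) *
            ((Finset.univ.filter fun t : F => z.1 + t • z.2 ∈ B).card : ℝ)
          - (Fintype.card F : ℝ) * B.card) ^ 2 := by
      rw [show (Bad.card : ℝ) *
          ((Fintype.card (Fin m → F) : ℝ) * β * (Fintype.card F : ℝ) / 2) ^ 2
        = ∑ _z ∈ Bad, ((Fintype.card (Fin m → F) : ℝ) * β * (Fintype.card F : ℝ) / 2) ^ 2 by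
          rw [Finset.sum_const, nsmul_eq_mul]]
      exact Finset.sum_le_sum hlow
    have h2 : ∑ z ∈ Bad, ((Fintype.card (Fin m → F) : ℝ) *
            ((Finset.univ.filter fun t : F => z.1 + t • z.2 ∈ B).card : ℝ)
          - (Fintype.card F : ℝ) * B.card) ^ 2
        ≤ ∑ z : (Fin m → F) × (Fin m → F), ((Fintype.card (Fin m → F) : ℝ) *
            ((Finset.univ.filter fun t : F => z.1 + t • z.2 ∈ B).card : ℝ)
          - (Fintype.card F : ℝ) * B.card) ^ 2 :=
      Finset.sum_le_sum_of_subset_of_nonneg (Finset.subset_univ Bad)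
        (fun z _ _ => sq_nonneg _)
    have hb4 : (B.card : ℝ) * ((Fintype.card (Fin m → F) : ℝ) - B.card)
        ≤ (Fintype.card (Fin m → F) : ℝ)^2/4 := by
      nlinarith [sq_nonneg ((Fintype.card (Fin m → F) : ℝ) - 2 * B.card)]
    have h3 : (Fintype.card F : ℝ) * B.card * (Fintype.card (Fin m → F) : ℝ) ^ 2 *
          ((Fintype.card (Fin m → F) : ℝ) - B.card)
        ≤ (Fintype.card F : ℝ) * ((Fintype.card (Fin m → F) : ℝ)^2/4) *
          (Fintype.card (Fin m → F) : ℝ) ^ 2 := by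
      have hmul := mul_le_mul_of_nonneg_left hb4
        (show (0:ℝ) ≤ (Fintype.card F : ℝ) * (Fintype.card (Fin m → F) : ℝ)^2 by positivity)
      calc (Fintype.card F : ℝ) * B.card * (Fintype.card (Fin m → F) : ℝ) ^ 2 *
            ((Fintype.card (Fin m → F) : ℝ) - B.card)
          = (Fintype.card F : ℝ) * (Fintype.card (Fin m → F) : ℝ)^2 *
            ((B.card : ℝ) * ((Fintype.card (Fin m → F) : ℝ) - B.card)) := by ring
        _ ≤ (Fintype.card F : ℝ) * (Fintype.card (Fin m → F) : ℝ)^2 *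
            ((Fintype.card (Fin m → F) : ℝ)^2/4) := hmul
        _ = (Fintype.card F : ℝ) * ((Fintype.card (Fin m → F) : ℝ)^2/4) *
            (Fintype.card (Fin m → F) : ℝ) ^ 2 := by ring
    calc (Bad.card : ℝ) * _ ≤ _ := h1
      _ ≤ _ := h2
      _ = _ := hvar
      _ ≤ _ := h3
  have hBadbound : (Bad.card : ℝ) ≤
      (Fintype.card (Fin m → F) : ℝ)^2 / (β^2 * (Fintype.card F : ℝ)) := by
    rw [le_div_iff₀ (by positivity)]
    have hpos : (0:ℝ) < (Fintype.card F : ℝ) * (Fintype.card (Fin m → F) : ℝ)^2 / 4 := by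
      positivity
    refine le_of_mul_le_mul_right ?_ hpos
    calc (Bad.card : ℝ) * (β^2 * (Fintype.card F : ℝ)) *
          ((Fintype.card F : ℝ) * (Fintype.card (Fin m → F) : ℝ)^2 / 4)
        = (Bad.card : ℝ) *
          ((Fintype.card (Fin m → F) : ℝ) * β * (Fintype.card F : ℝ) / 2) ^ 2 := by ring
      _ ≤ (Fintype.card F : ℝ) * ((Fintype.card (Fin m → F) : ℝ)^2/4) *
          (Fintype.card (Fin m → F) : ℝ) ^ 2 := hBadcard
      _ = (Fintype.card (Fin m → F) : ℝ)^2 *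
          ((Fintype.card F : ℝ) * (Fintype.card (Fin m → F) : ℝ)^2 / 4) := by ring
  -- STEP 4: per-point analysis
  have hsplit : Bad.card = ∑ x : Fin m → F,
      (Finset.univ.filter fun h : Fin m → F => (Q x h).eval 0 ≠ g x).card := by
    rw [hBad, Finset.card_filter, ← Finset.univ_product_univ, Finset.sum_product]
    exact Finset.sum_congr rfl fun x _ => (Finset.card_filter _ _).symm
  have hcorrpt : ∀ x : Fin m → F,
      2 * (Finset.univ.filter fun h : Fin m → F => (Q x h).eval 0 ≠ g x).card
        < Fintype.card (Fin m → F) → Corr x = g x := by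
    intro x hx
    by_contra hne
    have h1 : (Finset.univ.filter fun h : Fin m → F => (Q x h).eval 0 = g x).card +
        (Finset.univ.filter fun h : Fin m → F => ¬ ((Q x h).eval 0 = g x)).card
        = Fintype.card (Fin m → F) := by
      rw [Finset.card_filter_add_card_filter_not, Finset.card_univ]
    have h2 := hCorr x (g x)
    have h3 : (Finset.univ.filter fun h : Fin m → F => (Q x h).eval 0 = g x).card +
        (Finset.univ.filter fun h : Fin m → F => (Q x h).eval 0 = Corr x).card
        ≤ Fintype.card (Fin m → F) := by
      rw [← Finset.card_union_of_disjoint]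
      · exact le_trans (Finset.card_le_univ _) (le_of_eq Finset.card_univ)
      · rw [Finset.disjoint_filter]
        intro h _ hgx hcx
        exact hne (hcx.symm.trans hgx)
    have hx' : 2 * (Finset.univ.filter fun h : Fin m → F =>
        ¬ ((Q x h).eval 0 = g x)).card < Fintype.card (Fin m → F) := hx
    omega
  set BadX : Finset (Fin m → F) := Finset.univ.filter fun x => Corr x ≠ g x with hBadX
  have hmarkov : (BadX.card : ℝ) * ((Fintype.card (Fin m → F) : ℝ) / 2) ≤ (Bad.card : ℝ) := by
    have h1 : ∀ x ∈ BadX, (Fintype.card (Fin m → F) : ℝ) / 2 ≤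
        ((Finset.univ.filter fun h : Fin m → F => (Q x h).eval 0 ≠ g x).card : ℝ) := by
      intro x hx
      simp only [hBadX, Finset.mem_filter, Finset.mem_univ, true_and] at hx
      have := hcorrpt x
      have h2 : Fintype.card (Fin m → F) ≤
          2 * (Finset.univ.filter fun h : Fin m → F => (Q x h).eval 0 ≠ g x).card := by
        by_contra hcon
        exact hx (this (by omega))
      have : (Fintype.card (Fin m → F) : ℝ) ≤
          2 * ((Finset.univ.filter fun h : Fin m → F => (Q x h).eval 0 ≠ g x).card : ℝ) := by
        exact_mod_cast h2
      linarith
    calc (BadX.card : ℝ) * ((Fintype.card (Fin m → F) : ℝ) / 2)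
        = ∑ _x ∈ BadX, ((Fintype.card (Fin m → F) : ℝ) / 2) := by
          rw [Finset.sum_const, nsmul_eq_mul]
      _ ≤ ∑ x ∈ BadX, ((Finset.univ.filter fun h : Fin m → F =>
            (Q x h).eval 0 ≠ g x).card : ℝ) := Finset.sum_le_sum h1
      _ ≤ ∑ x : Fin m → F, ((Finset.univ.filter fun h : Fin m → F =>
            (Q x h).eval 0 ≠ g x).card : ℝ) :=
          Finset.sum_le_sum_of_subset_of_nonneg (Finset.subset_univ BadX)
            (fun x _ _ => Nat.cast_nonneg _)
      _ = (Bad.card : ℝ) := by rw [hsplit]; push_cast; rfl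
  -- STEP 5: conclude
  have hfd : fdist F m Corr g = (BadX.card : ℝ) / (Fintype.card (Fin m → F) : ℝ) := by
    rw [fdist, hNval]
  rw [hfd, div_le_iff₀ hN0]
  -- BadX.card * N/2 ≤ Bad.card ≤ N²/(β²q) and 2/(β²γ) ≤ q
  have hfinal : (BadX.card : ℝ) ≤ 2 * (Fintype.card (Fin m → F) : ℝ) /
      (β^2 * (Fintype.card F : ℝ)) := by
    have hmb := le_trans hmarkov hBadbound
    have h' := (le_div_iff₀ (by positivity : (0:ℝ) < β^2 * (Fintype.card F : ℝ))).mp hmb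
    rw [le_div_iff₀ (by positivity)]
    refine le_of_mul_le_mul_right ?_
      (show (0:ℝ) < (Fintype.card (Fin m → F) : ℝ)/2 by positivity)
    calc (BadX.card : ℝ) * (β^2 * (Fintype.card F : ℝ)) * ((Fintype.card (Fin m → F) : ℝ)/2)
        = (BadX.card : ℝ) * ((Fintype.card (Fin m → F) : ℝ)/2) *
          (β^2 * (Fintype.card F : ℝ)) := by ring
      _ ≤ (Fintype.card (Fin m → F) : ℝ)^2 := h'
      _ = 2 * (Fintype.card (Fin m → F) : ℝ) * ((Fintype.card (Fin m → F) : ℝ)/2) := by ring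
  have hgq : 2 * (Fintype.card (Fin m → F) : ℝ) / (β^2 * (Fintype.card F : ℝ))
      ≤ γ * (Fintype.card (Fin m → F) : ℝ) := by
    rw [div_le_iff₀ (by positivity)]
    have h2 : 2 ≤ β^2 * γ * (Fintype.card F : ℝ) := by
      rw [div_le_iff₀ (by positivity)] at hq2
      linarith [hq2]
    nlinarith [hN0, h2, hq0]
  linarith
end

section
/- Let F be a finite field, d ≥ 0 an integer, and ε a real number with d/|F| ≤ ε ≤ 1/4. Let (r_i)_{i ∈ F} and (c_j)_{j ∈ F} be families of univariate polynomials over F of degree at most d such that the fraction of pairs (i,j) ∈ F × F with r_i(j) ≠ c_j(i) is at most 1/4 - ε. Suppose Q(X,Y) is a bivariate polynomial over F of degree at most d in each variable such that the fraction of pairs (i,j) ∈ F × F with (r_i(j) ≠ Q(i,j) or c_j(i) ≠ Q(i,j)) is at most 1/2 - ε. Then |{i ∈ F : the polynomial r_i(Y) is not equal to Q(i,Y)}| ≤ |F|/4 and |{j ∈ F : the polynomial c_j(X) is not equal to Q(X,j)}| ≤ |F|/4. -/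
set_option maxHeartbeats 1000000

section aux

variable {F : Type} [Field F]

lemma rcas_filter_imp {α : Type} (s : Finset α) (p q : α → Prop)
    [DecidablePred p] [DecidablePred q] (h : ∀ a, p a → q a) :
    s.filter p ⊆ s.filter q := by
  intro a ha
  rw [Finset.mem_filter] at ha ⊢
  exact ⟨ha.1, h a ha.2⟩

lemma rcas_eval_row (Q : MvPolynomial (Fin 2) F) (i j : F) :
    Polynomial.eval j (MvPolynomial.aeval ![Polynomial.C i, Polynomial.X] Q) =
    MvPolynomial.eval ![i, j] Q := by
  rw [show Polynomial.eval j (MvPolynomial.aeval ![Polynomial.C i, Polynomial.X] Q)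
      = Polynomial.aeval j (MvPolynomial.aeval ![Polynomial.C i, Polynomial.X] Q) by
        rw [Polynomial.coe_aeval_eq_eval]]
  rw [MvPolynomial.comp_aeval_apply]
  rw [show MvPolynomial.eval ![i,j] Q = MvPolynomial.aeval ![i,j] Q by
    simp [MvPolynomial.aeval_def]]
  congr 1
  have : (fun k => Polynomial.aeval j (![Polynomial.C i, Polynomial.X] k)) = ![i, j] := by
    funext k; fin_cases k <;> simp
  rw [this]

lemma rcas_eval_col (Q : MvPolynomial (Fin 2) F) (i j : F) :
    Polynomial.eval i (MvPolynomial.aeval ![Polynomial.X, Polynomial.C j] Q) =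
    MvPolynomial.eval ![i, j] Q := by
  rw [show Polynomial.eval i (MvPolynomial.aeval ![Polynomial.X, Polynomial.C j] Q)
      = Polynomial.aeval i (MvPolynomial.aeval ![Polynomial.X, Polynomial.C j] Q) by
        rw [Polynomial.coe_aeval_eq_eval]]
  rw [MvPolynomial.comp_aeval_apply]
  rw [show MvPolynomial.eval ![i,j] Q = MvPolynomial.aeval ![i,j] Q by
    simp [MvPolynomial.aeval_def]]
  congr 1
  have : (fun k => Polynomial.aeval i (![Polynomial.X, Polynomial.C j] k)) = ![i, j] := by
    funext k; fin_cases k <;> simp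
  rw [this]

open Polynomial in
lemma rcas_deg_row (Q : MvPolynomial (Fin 2) F) (i : F) :
    (MvPolynomial.aeval ![Polynomial.C i, Polynomial.X] Q).natDegree ≤ Q.degreeOf 1 := by
  rw [MvPolynomial.aeval_def, MvPolynomial.eval₂_eq]
  refine (Polynomial.natDegree_sum_le _ _).trans ?_
  rw [Finset.fold_max_le]
  refine ⟨Nat.zero_le _, ?_⟩
  rintro m hm
  refine le_trans ?_ (MvPolynomial.degreeOf_eq_sup 1 Q ▸ Finset.le_sup hm)
  simp only [Function.comp]
  refine (Polynomial.natDegree_mul_le).trans ?_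
  rw [show ((algebraMap F F[X]) (MvPolynomial.coeff m Q)).natDegree = 0 from natDegree_C _]
  rw [zero_add]
  refine (Polynomial.natDegree_prod_le _ _).trans ?_
  refine le_trans (Finset.sum_le_sum_of_subset (Finset.subset_univ m.support)) ?_
  rw [Fin.sum_univ_two]
  simp [Polynomial.natDegree_pow]

open Polynomial in
lemma rcas_deg_col (Q : MvPolynomial (Fin 2) F) (j : F) :
    (MvPolynomial.aeval ![Polynomial.X, Polynomial.C j] Q).natDegree ≤ Q.degreeOf 0 := by
  rw [MvPolynomial.aeval_def, MvPolynomial.eval₂_eq]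
  refine (Polynomial.natDegree_sum_le _ _).trans ?_
  rw [Finset.fold_max_le]
  refine ⟨Nat.zero_le _, ?_⟩
  rintro m hm
  refine le_trans ?_ (MvPolynomial.degreeOf_eq_sup 0 Q ▸ Finset.le_sup hm)
  simp only [Function.comp]
  refine (Polynomial.natDegree_mul_le).trans ?_
  rw [show ((algebraMap F F[X]) (MvPolynomial.coeff m Q)).natDegree = 0 from natDegree_C _]
  rw [zero_add]
  refine (Polynomial.natDegree_prod_le _ _).trans ?_
  refine le_trans (Finset.sum_le_sum_of_subset (Finset.subset_univ m.support)) ?_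
  rw [Fin.sum_univ_two]
  simp [Polynomial.natDegree_pow]

lemma rcas_agree_card [Fintype F] [DecidableEq F] {d : ℕ}
    {p1 p2 : Polynomial F} (h : p1 ≠ p2) (h1 : p1.natDegree ≤ d) (h2 : p2.natDegree ≤ d) :
    (Finset.univ.filter fun x => p1.eval x = p2.eval x).card ≤ d := by
  have hne : p1 - p2 ≠ 0 := sub_ne_zero.mpr h
  have hsub : (Finset.univ.filter fun x => p1.eval x = p2.eval x) ⊆ (p1 - p2).roots.toFinset := by
    intro x hx
    simp only [Finset.mem_filter] at hx
    simp [Multiset.mem_toFinset, Polynomial.mem_roots hne, Polynomial.IsRoot, sub_eq_zero, hx.2]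
  calc (Finset.univ.filter fun x => p1.eval x = p2.eval x).card
      ≤ (p1 - p2).roots.toFinset.card := Finset.card_le_card hsub
    _ ≤ Multiset.card (p1 - p2).roots := Multiset.toFinset_card_le _
    _ ≤ (p1 - p2).natDegree := (Polynomial.card_roots' _)
    _ ≤ d := le_trans (Polynomial.natDegree_sub_le _ _) (by omega)

lemma rcas_card_fst {F : Type} [Fintype F] (p : F → F → Prop) [∀ i j, Decidable (p i j)] :
    (Finset.univ.filter fun z : F × F => p z.1 z.2).card
      = ∑ i : F, (Finset.univ.filter fun j => p i j).card := by
  rw [Finset.card_filter, Fintype.sum_prod_type]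
  exact Finset.sum_congr rfl fun i _ => (Finset.card_filter _ _).symm

lemma rcas_card_snd {F : Type} [Fintype F] (p : F → F → Prop) [∀ i j, Decidable (p i j)] :
    (Finset.univ.filter fun z : F × F => p z.1 z.2).card
      = ∑ j : F, (Finset.univ.filter fun i => p i j).card := by
  rw [Finset.card_filter, Fintype.sum_prod_type_right]
  exact Finset.sum_congr rfl fun j _ => (Finset.card_filter _ _).symm

lemma rcas_cover {F : Type} [Fintype F] [DecidableEq F] (p : F → Prop) [DecidablePred p] [DecidablePred (fun a => ¬ p a)] :
    Fintype.card F ≤ (Finset.univ.filter p).card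
      + (Finset.univ.filter fun a => ¬ p a).card := by
  have hcover : (Finset.univ : Finset F) ⊆
      (Finset.univ.filter p) ∪ (Finset.univ.filter fun a => ¬ p a) := by
    intro j _
    by_cases h : p j
    · exact Finset.mem_union_left _ (Finset.mem_filter.mpr ⟨Finset.mem_univ _, h⟩)
    · exact Finset.mem_union_right _ (Finset.mem_filter.mpr ⟨Finset.mem_univ _, h⟩)
  calc Fintype.card F = (Finset.univ : Finset F).card := (Finset.card_univ).symm
    _ ≤ _ := Finset.card_le_card hcover
    _ ≤ _ := Finset.card_union_le _ _

end aux

/-- strengthening step: Let `F` be a finite field, `d ≥ 0`, and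
`d/|F| ≤ ε ≤ 1/4`. Let `(r_i)` and `(c_j)` be families of univariate polynomials of
degree at most `d` with the fraction of pairs `(i,j)` where `r_i(j) ≠ c_j(i)` at most
`1/4 - ε`. If `Q` is a bivariate polynomial of degree at most `d` in each variable
such that the fraction of pairs `(i,j)` with `r_i(j) ≠ Q(i,j)` or `c_j(i) ≠ Q(i,j)`
is at most `1/2 - ε`, then `r_i(Y) = Q(i,Y)` for all but at most `|F|/4` of the
`i`'s, and `c_j(X) = Q(X,j)` for all but at most `|F|/4` of the `j`'s. -/
theorem row_col_agreement_strengthen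
    (F : Type) [Field F] [Fintype F] [DecidableEq F] (d : ℕ) (ε : ℝ)
    (hεl : (d : ℝ) / (Fintype.card F : ℝ) ≤ ε) (hεu : ε ≤ 1 / 4)
    (r c : F → Polynomial F)
    (hr : ∀ i, (r i).natDegree ≤ d) (hc : ∀ j, (c j).natDegree ≤ d)
    (hdisagree : ((Finset.univ.filter fun z : F × F =>
        (r z.1).eval z.2 ≠ (c z.2).eval z.1).card : ℝ) /
      (Fintype.card F : ℝ) ^ 2 ≤ 1 / 4 - ε)
    (Q : MvPolynomial (Fin 2) F)
    (hQ0 : Q.degreeOf 0 ≤ d) (hQ1 : Q.degreeOf 1 ≤ d)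
    (hQclose : ((Finset.univ.filter fun z : F × F =>
        (r z.1).eval z.2 ≠ MvPolynomial.eval ![z.1, z.2] Q ∨
        (c z.2).eval z.1 ≠ MvPolynomial.eval ![z.1, z.2] Q).card : ℝ) /
      (Fintype.card F : ℝ) ^ 2 ≤ 1 / 2 - ε) :
    ((Finset.univ.filter fun i : F =>
        r i ≠ MvPolynomial.aeval ![Polynomial.C i, Polynomial.X] Q).card : ℝ) ≤
      (Fintype.card F : ℝ) / 4 ∧
    ((Finset.univ.filter fun j : F =>
        c j ≠ MvPolynomial.aeval ![Polynomial.X, Polynomial.C j] Q).card : ℝ) ≤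
      (Fintype.card F : ℝ) / 4 := by
  classical
  set q := Fintype.card F with hqdef
  have hq0 : 0 < q := Fintype.card_pos
  have hq0R : (0:ℝ) < (q:ℝ) := by exact_mod_cast hq0
  have hε0 : 0 ≤ ε := le_trans (by positivity) hεl
  have hdε : (d:ℝ) ≤ ε * q := by
    rw [div_le_iff₀ hq0R] at hεl; linarith
  have hd4 : (d:ℝ) ≤ (q:ℝ)/4 := by
    nlinarith [mul_le_mul_of_nonneg_right hεu hq0R.le]
  set ev : F → F → F := fun i j => MvPolynomial.eval ![i, j] Q with hevdef
  have hevap : ∀ i j : F, ev i j = MvPolynomial.eval ![i, j] Q := fun _ _ => rfl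
  set Rset := Finset.univ.filter fun i : F =>
      r i ≠ MvPolynomial.aeval ![Polynomial.C i, Polynomial.X] Q with hRdef
  set Cset := Finset.univ.filter fun j : F =>
      c j ≠ MvPolynomial.aeval ![Polynomial.X, Polynomial.C j] Q with hCdef
  -- row/column disagreement counts
  have hrow_count : ∀ i ∈ Rset,
      q ≤ (Finset.univ.filter fun j => ¬ ((r i).eval j = ev i j)).card + d := by
    intro i hi
    rw [hRdef, Finset.mem_filter] at hi
    have hagree : (Finset.univ.filter fun j => (r i).eval j = ev i j).card ≤ d := by
      have heq : (Finset.univ.filter fun j => (r i).eval j = ev i j)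
          = (Finset.univ.filter fun j => (r i).eval j
            = (MvPolynomial.aeval ![Polynomial.C i, Polynomial.X] Q).eval j) := by
        apply Finset.filter_congr; intro j _; rw [rcas_eval_row, hevap]
      rw [heq]
      exact rcas_agree_card hi.2 (hr i) (le_trans (rcas_deg_row Q i) hQ1)
    have hkey := rcas_cover (F := F) (fun j => (r i).eval j = ev i j)
    omega
  have hcol_count : ∀ j ∈ Cset,
      q ≤ (Finset.univ.filter fun i => ¬ ((c j).eval i = ev i j)).card + d := by
    intro j hj
    rw [hCdef, Finset.mem_filter] at hj
    have hagree : (Finset.univ.filter fun i => (c j).eval i = ev i j).card ≤ d := by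
      have heq : (Finset.univ.filter fun i => (c j).eval i = ev i j)
          = (Finset.univ.filter fun i => (c j).eval i
            = (MvPolynomial.aeval ![Polynomial.X, Polynomial.C j] Q).eval i) := by
        apply Finset.filter_congr; intro i _; rw [rcas_eval_col, hevap]
      rw [heq]
      exact rcas_agree_card hj.2 (hc j) (le_trans (rcas_deg_col Q j) hQ0)
    have hkey := rcas_cover (F := F) (fun i => (c j).eval i = ev i j)
    omega
  set Bcard := (Finset.univ.filter fun z : F × F =>
        (r z.1).eval z.2 ≠ MvPolynomial.eval ![z.1, z.2] Q ∨
        (c z.2).eval z.1 ≠ MvPolynomial.eval ![z.1, z.2] Q).card with hBdef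
  set Acard := (Finset.univ.filter fun z : F × F =>
        (r z.1).eval z.2 ≠ (c z.2).eval z.1).card with hAdef
  have hAle : (Acard : ℝ) ≤ (1/4 - ε) * q^2 := by
    rw [div_le_iff₀ (by positivity)] at hdisagree; exact hdisagree
  have hBle : (Bcard : ℝ) ≤ (1/2 - ε) * q^2 := by
    rw [div_le_iff₀ (by positivity)] at hQclose; exact hQclose
  -- crude bounds
  have hRB : Rset.card * (q - d) ≤ Bcard := by
    have h1 : Bcard = ∑ i : F, (Finset.univ.filter fun j =>
        (r i).eval j ≠ ev i j ∨ (c j).eval i ≠ ev i j).card := by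
      rw [hBdef]
      exact rcas_card_fst (fun i j => (r i).eval j ≠ ev i j ∨ (c j).eval i ≠ ev i j)
    have h2 : ∀ i ∈ Rset, q - d ≤ (Finset.univ.filter fun j =>
        (r i).eval j ≠ ev i j ∨ (c j).eval i ≠ ev i j).card := by
      intro i hi
      have hcnt := hrow_count i hi
      have hsub : (Finset.univ.filter fun j => ¬ ((r i).eval j = ev i j))
          ⊆ (Finset.univ.filter fun j => (r i).eval j ≠ ev i j ∨ (c j).eval i ≠ ev i j) :=
        rcas_filter_imp _ _ _ (fun j h => Or.inl h)
      have := Finset.card_le_card hsub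
      omega
    calc Rset.card * (q - d) = ∑ _i ∈ Rset, (q - d) := by rw [Finset.sum_const, smul_eq_mul]
      _ ≤ ∑ i ∈ Rset, (Finset.univ.filter fun j =>
            (r i).eval j ≠ ev i j ∨ (c j).eval i ≠ ev i j).card := Finset.sum_le_sum h2
      _ ≤ ∑ i : F, (Finset.univ.filter fun j =>
            (r i).eval j ≠ ev i j ∨ (c j).eval i ≠ ev i j).card :=
          Finset.sum_le_sum_of_subset (Finset.subset_univ _)
      _ = Bcard := h1.symm
  have hCB : Cset.card * (q - d) ≤ Bcard := by
    have h1 : Bcard = ∑ j : F, (Finset.univ.filter fun i =>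
        (r i).eval j ≠ ev i j ∨ (c j).eval i ≠ ev i j).card := by
      rw [hBdef]
      exact rcas_card_snd (fun i j => (r i).eval j ≠ ev i j ∨ (c j).eval i ≠ ev i j)
    have h2 : ∀ j ∈ Cset, q - d ≤ (Finset.univ.filter fun i =>
        (r i).eval j ≠ ev i j ∨ (c j).eval i ≠ ev i j).card := by
      intro j hj
      have hcnt := hcol_count j hj
      have hsub : (Finset.univ.filter fun i => ¬ ((c j).eval i = ev i j))
          ⊆ (Finset.univ.filter fun i => (r i).eval j ≠ ev i j ∨ (c j).eval i ≠ ev i j) :=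
        rcas_filter_imp _ _ _ (fun i h => Or.inr h)
      have := Finset.card_le_card hsub
      omega
    calc Cset.card * (q - d) = ∑ _j ∈ Cset, (q - d) := by rw [Finset.sum_const, smul_eq_mul]
      _ ≤ ∑ j ∈ Cset, (Finset.univ.filter fun i =>
            (r i).eval j ≠ ev i j ∨ (c j).eval i ≠ ev i j).card := Finset.sum_le_sum h2
      _ ≤ ∑ j : F, (Finset.univ.filter fun i =>
            (r i).eval j ≠ ev i j ∨ (c j).eval i ≠ ev i j).card :=
          Finset.sum_le_sum_of_subset (Finset.subset_univ _)
      _ = Bcard := h1.symm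
  -- refined counts
  have hti : ∀ i ∈ Rset, q ≤ (Finset.univ.filter fun j =>
      j ∉ Cset ∧ (r i).eval j ≠ ev i j).card + d + Cset.card := by
    intro i hi
    have h1 := hrow_count i hi
    have hsplit : (Finset.univ.filter fun j => ¬ ((r i).eval j = ev i j))
        ⊆ (Finset.univ.filter fun j => j ∉ Cset ∧ (r i).eval j ≠ ev i j) ∪ Cset := by
      intro j hj
      rw [Finset.mem_filter] at hj
      by_cases hjc : j ∈ Cset
      · exact Finset.mem_union_right _ hjc
      · exact Finset.mem_union_left _ (Finset.mem_filter.mpr ⟨Finset.mem_univ _, hjc, hj.2⟩)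
    have := le_trans (Finset.card_le_card hsplit) (Finset.card_union_le _ _)
    omega
  have huj : ∀ j ∈ Cset, q ≤ (Finset.univ.filter fun i =>
      i ∉ Rset ∧ (c j).eval i ≠ ev i j).card + d + Rset.card := by
    intro j hj
    have h1 := hcol_count j hj
    have hsplit : (Finset.univ.filter fun i => ¬ ((c j).eval i = ev i j))
        ⊆ (Finset.univ.filter fun i => i ∉ Rset ∧ (c j).eval i ≠ ev i j) ∪ Rset := by
      intro i hi
      rw [Finset.mem_filter] at hi
      by_cases hir : i ∈ Rset
      · exact Finset.mem_union_right _ hir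
      · exact Finset.mem_union_left _ (Finset.mem_filter.mpr ⟨Finset.mem_univ _, hir, hi.2⟩)
    have := le_trans (Finset.card_le_card hsplit) (Finset.card_union_le _ _)
    omega
  -- pairs inside A
  have hAbound : (∑ i ∈ Rset, (Finset.univ.filter fun j =>
        j ∉ Cset ∧ (r i).eval j ≠ ev i j).card)
      + (∑ j ∈ Cset, (Finset.univ.filter fun i =>
        i ∉ Rset ∧ (c j).eval i ≠ ev i j).card) ≤ Acard := by
    set A1 := Finset.univ.filter (fun z : F × F =>
      z.1 ∈ Rset ∧ z.2 ∉ Cset ∧ (r z.1).eval z.2 ≠ ev z.1 z.2) with hA1def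
    set A2 := Finset.univ.filter (fun z : F × F =>
      z.1 ∉ Rset ∧ z.2 ∈ Cset ∧ (c z.2).eval z.1 ≠ ev z.1 z.2) with hA2def
    have hdisj : Disjoint A1 A2 := by
      rw [Finset.disjoint_left]
      intro z hz1 hz2
      rw [hA1def, Finset.mem_filter] at hz1
      rw [hA2def, Finset.mem_filter] at hz2
      exact hz2.2.1 hz1.2.1
    have hsubA : A1 ∪ A2 ⊆ Finset.univ.filter fun z : F × F =>
        (r z.1).eval z.2 ≠ (c z.2).eval z.1 := by
      intro z hz
      rw [Finset.mem_union] at hz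
      refine Finset.mem_filter.mpr ⟨Finset.mem_univ _, ?_⟩
      rcases hz with hz | hz
      · rw [hA1def, Finset.mem_filter] at hz
        obtain ⟨-, -, hz2, hz3⟩ := hz
        have hcq : (c z.2).eval z.1 = ev z.1 z.2 := by
          rw [hCdef, Finset.mem_filter] at hz2
          push_neg at hz2
          rw [hz2 (Finset.mem_univ _), rcas_eval_col, hevap]
        rw [hcq]; exact hz3
      · rw [hA2def, Finset.mem_filter] at hz
        obtain ⟨-, hz1, -, hz3⟩ := hz
        have hrq : (r z.1).eval z.2 = ev z.1 z.2 := by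
          rw [hRdef, Finset.mem_filter] at hz1
          push_neg at hz1
          rw [hz1 (Finset.mem_univ _), rcas_eval_row, hevap]
        rw [hrq]
        exact fun h => hz3 h.symm
    have hcards : A1.card + A2.card ≤ Acard := by
      rw [← Finset.card_union_of_disjoint hdisj, hAdef]
      exact Finset.card_le_card hsubA
    have hA1card : (∑ i ∈ Rset, (Finset.univ.filter fun j =>
        j ∉ Cset ∧ (r i).eval j ≠ ev i j).card) ≤ A1.card := by
      have h1 : A1.card = ∑ i : F, (Finset.univ.filter fun j =>
          i ∈ Rset ∧ j ∉ Cset ∧ (r i).eval j ≠ ev i j).card := by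
        rw [hA1def]
        exact rcas_card_fst (fun i j => i ∈ Rset ∧ j ∉ Cset ∧ (r i).eval j ≠ ev i j)
      rw [h1]
      refine le_trans (Finset.sum_le_sum ?_) (Finset.sum_le_sum_of_subset (Finset.subset_univ _))
      intro i hi
      exact Finset.card_le_card (rcas_filter_imp _ _ _ (fun j h => ⟨hi, h⟩))
    have hA2card : (∑ j ∈ Cset, (Finset.univ.filter fun i =>
        i ∉ Rset ∧ (c j).eval i ≠ ev i j).card) ≤ A2.card := by
      have h1 : A2.card = ∑ j : F, (Finset.univ.filter fun i =>
          i ∉ Rset ∧ j ∈ Cset ∧ (c j).eval i ≠ ev i j).card := by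
        rw [hA2def]
        exact rcas_card_snd (fun i j => i ∉ Rset ∧ j ∈ Cset ∧ (c j).eval i ≠ ev i j)
      rw [h1]
      refine le_trans (Finset.sum_le_sum ?_) (Finset.sum_le_sum_of_subset (Finset.subset_univ _))
      intro j hj
      exact Finset.card_le_card (rcas_filter_imp _ _ _ (fun i h => ⟨h.1, hj, h.2⟩))
    omega
  -- to the reals
  have hρ0 : (0:ℝ) ≤ (Rset.card : ℝ) := Nat.cast_nonneg _
  have hγ0 : (0:ℝ) ≤ (Cset.card : ℝ) := Nat.cast_nonneg _
  have hRBR : (Rset.card:ℝ) * ((q:ℝ) - d) ≤ (1/2 - ε) * q^2 := by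
    refine le_trans ?_ hBle
    by_cases hqd : d ≤ q
    · calc (Rset.card:ℝ) * ((q:ℝ) - d) = ((Rset.card * (q - d) : ℕ) : ℝ) := by
            push_cast [Nat.cast_sub hqd]; ring
        _ ≤ (Bcard : ℝ) := by exact_mod_cast hRB
    · nlinarith [Nat.cast_nonneg (α := ℝ) Bcard,
        (by exact_mod_cast Nat.lt_of_not_le hqd : (q:ℝ) < d)]
  have hCBR : (Cset.card:ℝ) * ((q:ℝ) - d) ≤ (1/2 - ε) * q^2 := by
    refine le_trans ?_ hBle
    by_cases hqd : d ≤ q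
    · calc (Cset.card:ℝ) * ((q:ℝ) - d) = ((Cset.card * (q - d) : ℕ) : ℝ) := by
            push_cast [Nat.cast_sub hqd]; ring
        _ ≤ (Bcard : ℝ) := by exact_mod_cast hCB
    · nlinarith [Nat.cast_nonneg (α := ℝ) Bcard,
        (by exact_mod_cast Nat.lt_of_not_le hqd : (q:ℝ) < d)]
  have hmain : (Rset.card:ℝ) * ((q:ℝ) - d - (Cset.card:ℝ)) + (Cset.card:ℝ) * ((q:ℝ) - d - (Rset.card:ℝ)) ≤ (1/4 - ε) * q^2 := by
    refine le_trans ?_ hAle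
    have h1 : (Rset.card:ℝ) * ((q:ℝ) - d - (Cset.card:ℝ)) ≤ ((∑ i ∈ Rset, (Finset.univ.filter fun j =>
        j ∉ Cset ∧ (r i).eval j ≠ ev i j).card : ℕ) : ℝ) := by
      push_cast
      calc (Rset.card:ℝ) * ((q:ℝ) - d - (Cset.card:ℝ)) = ∑ _i ∈ Rset, ((q:ℝ) - d - (Cset.card:ℝ)) := by
            rw [Finset.sum_const, nsmul_eq_mul]
        _ ≤ ∑ i ∈ Rset, ((Finset.univ.filter fun j =>
              j ∉ Cset ∧ (r i).eval j ≠ ev i j).card : ℝ) := by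
            refine Finset.sum_le_sum fun i hi => ?_
            have h := hti i hi
            have h' : (q:ℝ) ≤ ((Finset.univ.filter fun j =>
                j ∉ Cset ∧ (r i).eval j ≠ ev i j).card : ℝ) + d + (Cset.card:ℝ) := by exact_mod_cast h
            linarith
    have h2 : (Cset.card:ℝ) * ((q:ℝ) - d - (Rset.card:ℝ)) ≤ ((∑ j ∈ Cset, (Finset.univ.filter fun i =>
        i ∉ Rset ∧ (c j).eval i ≠ ev i j).card : ℕ) : ℝ) := by
      push_cast
      calc (Cset.card:ℝ) * ((q:ℝ) - d - (Rset.card:ℝ)) = ∑ _j ∈ Cset, ((q:ℝ) - d - (Rset.card:ℝ)) := by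
            rw [Finset.sum_const, nsmul_eq_mul]
        _ ≤ ∑ j ∈ Cset, ((Finset.univ.filter fun i =>
              i ∉ Rset ∧ (c j).eval i ≠ ev i j).card : ℝ) := by
            refine Finset.sum_le_sum fun j hj => ?_
            have h := huj j hj
            have h' : (q:ℝ) ≤ ((Finset.univ.filter fun i =>
                i ∉ Rset ∧ (c j).eval i ≠ ev i j).card : ℝ) + d + (Rset.card:ℝ) := by exact_mod_cast h
            linarith
    have h3 : ((∑ i ∈ Rset, (Finset.univ.filter fun j =>
        j ∉ Cset ∧ (r i).eval j ≠ ev i j).card : ℕ) : ℝ)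
      + ((∑ j ∈ Cset, (Finset.univ.filter fun i =>
        i ∉ Rset ∧ (c j).eval i ≠ ev i j).card : ℕ) : ℝ) ≤ (Acard : ℝ) := by
      exact_mod_cast hAbound
    linarith
  -- the half bounds
  have hhalf : ∀ x : ℝ, 0 ≤ x → x * ((q:ℝ) - d) ≤ (1/2 - ε) * q^2 → x ≤ (q:ℝ)/2 := by
    intro x hx0 hx
    have hpos : (0:ℝ) < (1 - ε) * q := by nlinarith
    have e1 : x * ((1 - ε) * q) ≤ x * ((q:ℝ) - d) :=
      mul_le_mul_of_nonneg_left (by linarith) hx0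
    have e2 : (1/2 - ε) * (q:ℝ)^2 ≤ ((1 - ε) * q) * ((q:ℝ)/2) := by
      nlinarith [mul_nonneg hε0 (sq_nonneg (q:ℝ))]
    have h3 : ((1 - ε) * q) * x ≤ ((1 - ε) * q) * ((q:ℝ)/2) := by nlinarith
    exact le_of_mul_le_mul_left h3 hpos
  have hρhalf : (Rset.card:ℝ) ≤ (q:ℝ)/2 := hhalf _ hρ0 hRBR
  have hγhalf : (Cset.card:ℝ) ≤ (q:ℝ)/2 := hhalf _ hγ0 hCBR
  constructor
  · by_contra hcon
    push_neg at hcon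
    have hx1 : (0:ℝ) < (q:ℝ) - d - (Cset.card:ℝ) := by linarith
    have hx2 : (0:ℝ) ≤ 3 * (q:ℝ) / 4 - d - (Rset.card:ℝ) := by linarith
    nlinarith [mul_pos (sub_pos.mpr hcon) hx1, mul_nonneg hγ0 hx2,
      mul_nonneg hq0R.le (by linarith : (0:ℝ) ≤ ε * q - d)]
  · by_contra hcon
    push_neg at hcon
    have hx1 : (0:ℝ) < (q:ℝ) - d - (Rset.card:ℝ) := by linarith
    have hx2 : (0:ℝ) ≤ 3 * (q:ℝ) / 4 - d - (Cset.card:ℝ) := by linarith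
    nlinarith [mul_pos (sub_pos.mpr hcon) hx1, mul_nonneg hρ0 hx2,
      mul_nonneg hq0R.le (by linarith : (0:ℝ) ≤ ε * q - d)]
end

section
/- Let H be a nonempty finite set, S any type, and v : H → S a function. Suppose a ∈ S is a plurality value of v, i.e., |{h ∈ H : v(h) = a}| ≥ |{h ∈ H : v(h) = b}| for every b ∈ S. Then |{h ∈ H : v(h) ≠ a}| / |H| ≤ |{(h₁,h₂) ∈ H × H : v(h₁) ≠ v(h₂)}| / |H|². -/
/-- plurality vs. collision probability: If `a` is a plurality value of
`v : H → S` on a nonempty finite set `H`, then the fraction of `h` with `v h ≠ a` is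
at most the fraction of pairs `(h₁,h₂)` with `v h₁ ≠ v h₂`. -/
theorem plurality_le_collision
    (H S : Type) [Fintype H] [Nonempty H] [DecidableEq S]
    (v : H → S) (a : S)
    (ha : ∀ b : S, (Finset.univ.filter fun h : H => v h = b).card ≤
      (Finset.univ.filter fun h : H => v h = a).card) :
    ((Finset.univ.filter fun h : H => v h ≠ a).card : ℝ) / (Fintype.card H : ℝ) ≤
    ((Finset.univ.filter fun z : H × H => v z.1 ≠ v z.2).card : ℝ) /
      (Fintype.card H : ℝ) ^ 2 := by
  classical
  set n := Fintype.card H with hn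
  set m := (Finset.univ.filter fun h : H => v h = a).card with hm
  set d := (Finset.univ.filter fun h : H => v h ≠ a).card with hd
  set E := (Finset.univ.filter fun z : H × H => v z.1 = v z.2).card with hE
  set U := (Finset.univ.filter fun z : H × H => v z.1 ≠ v z.2).card with hU
  have hnpos : 0 < n := Fintype.card_pos
  have hmd : m + d = n := by
    rw [hm, hd, hn, ← Finset.card_univ]
    exact Finset.card_filter_add_card_filter_not _
  have hEU : E + U = n ^ 2 := by
    rw [hE, hU, hn, sq, ← Fintype.card_prod, ← Finset.card_univ]
    exact Finset.card_filter_add_card_filter_not _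
  -- count equal pairs fiberwise over the first coordinate
  have hEsum : E = ∑ h : H, (Finset.univ.filter fun h2 : H => v h2 = v h).card := by
    rw [hE]
    rw [Finset.card_eq_sum_card_fiberwise
      (f := fun z : H × H => z.1) (t := Finset.univ) (fun x _ => Finset.mem_univ _)]
    refine Finset.sum_congr rfl fun h _ => ?_
    refine Finset.card_bij' (fun z _ => z.2) (fun h2 _ => (h, h2)) ?_ ?_ ?_ ?_
    · intro z hz
      simp only [Finset.mem_filter, Finset.mem_univ, true_and] at hz ⊢
      rw [← hz.2, hz.1]
    · intro h2 hh2
      simp only [Finset.mem_filter, Finset.mem_univ, true_and] at hh2 ⊢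
      exact ⟨hh2.symm, trivial⟩
    · intro z hz
      simp only [Finset.mem_filter, Finset.mem_univ, true_and] at hz
      simp [← hz.2]
    · intro h2 _; rfl
  have hEle : E ≤ n * m := by
    rw [hEsum]
    calc ∑ h : H, (Finset.univ.filter fun h2 : H => v h2 = v h).card
        ≤ ∑ _h : H, m := Finset.sum_le_sum fun h _ => ha (v h)
      _ = n * m := by simp [hn, Finset.card_univ, mul_comm]
  have key : n * d ≤ U := by
    have : E + n * d ≤ n ^ 2 := by
      calc E + n * d ≤ n * m + n * d := by omega
        _ = n * (m + d) := by ring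
        _ = n ^ 2 := by rw [hmd]; ring
    omega
  have hnR : (0 : ℝ) < (n : ℝ) := by exact_mod_cast hnpos
  rw [div_le_div_iff₀ hnR (by positivity)]
  have keyR : (n : ℝ) * d ≤ U := by exact_mod_cast key
  nlinarith [keyR, hnR]
end
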